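/- arXiv:2106.08619 — 4 statements merged into one kernel-verified Lean document; each statement's English description precedes it below -/
import Mathlib

section
/- Let d, s, H be positive integers, P ⊆ {1,...,d} a set of patch indices, and σ : ℝ → ℝ differentiable. Consider the one-hidden-layer convolutional network f^CNN(x;θ) = (1/√H) Σ_{h=1}^H a_h (1/|P|) Σ_{i∈P} σ(w_h·x_i + b_h), with parameters θ consisting of all a_h ∈ ℝ, w_h ∈ ℝ^s, b_h ∈ ℝ. Then its finite-width neural tangent kernel Θ^CN_N(x,y;θ) = Σ_n ∂_{θ_n} f^CNN(x;θ) ∂_{θ_n} f^CNN(y;θ) satisfies Θ^CN_N(x,y;θ) = (1/|P|²) Σ_{i,j∈P} Θ^FC_N(x_i, y_j; θ), where Θ^FC_N(u,v;θ) = (1/H) Σ_{h=1}^H [ σ(w_h·u + b_h) σ(w_h·v + b_h) + a_h² σ'(w_h·u + b_h) σ'(w_h·v + b_h) (u·v + 1) ] is the finite-width NTK of the one-hidden-layer fully-connected network (1/√H) Σ_h a_h σ(w_h·u + b_h) acting on s-dimensional inputs. -/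
noncomputable section

/-- The cyclic `s`-dimensional patch of `x ∈ ℝ^d` starting at the (0-based) index `i`. -/
def patch (d s : ℕ) (i : ℕ) (x : Fin d → ℝ) : Fin s → ℝ :=
  fun j => if h : 0 < d then x ⟨(i + j.val) % d, Nat.mod_lt _ h⟩ else 0

/-- One-hidden-layer convolutional network with average pooling:
`f^CNN(x) = (1/√H) Σ_h a_h (1/|P|) Σ_{i∈P} σ(w_h·x_i + b_h)`. -/
def fCNN (d s H : ℕ) (P : Finset (Fin d)) (σ : ℝ → ℝ)
    (a : Fin H → ℝ) (w : Fin H → Fin s → ℝ) (b : Fin H → ℝ) (x : Fin d → ℝ) : ℝ :=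
  (1 / Real.sqrt H) * ∑ h : Fin H, a h *
    ((1 / (P.card : ℝ)) * ∑ i ∈ P, σ (∑ l, w h l * patch d s i.val x l + b h))

/-- Finite-width NTK of a one-hidden-layer fully-connected network on `s`-dimensional
inputs:
`Θ^FC_N(u,v) = (1/H) Σ_h [σ(w_h·u+b_h)σ(w_h·v+b_h) + a_h² σ'(w_h·u+b_h)σ'(w_h·v+b_h)(u·v+1)]`. -/
def thetaFC (s H : ℕ) (σ : ℝ → ℝ)
    (a : Fin H → ℝ) (w : Fin H → Fin s → ℝ) (b : Fin H → ℝ) (u v : Fin s → ℝ) : ℝ :=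
  (1 / (H : ℝ)) * ∑ h : Fin H,
    (σ (∑ l, w h l * u l + b h) * σ (∑ l, w h l * v l + b h) +
      (a h) ^ 2 * deriv σ (∑ l, w h l * u l + b h) * deriv σ (∑ l, w h l * v l + b h) *
        (∑ l, u l * v l + 1))

lemma prod_sum_expand {ι₁ ι₂ : Type*} (S : Finset ι₁) (T : Finset ι₂)
    (A : ι₁ → ℝ) (B : ι₂ → ℝ) (c e : ℝ) :
    (c * ∑ i ∈ S, A i) * (e * ∑ j ∈ T, B j)
      = ∑ i ∈ S, ∑ j ∈ T, (c * e) * (A i * B j) := by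
  rw [mul_mul_mul_comm, Finset.sum_mul_sum, Finset.mul_sum]
  exact Finset.sum_congr rfl fun i _ => by rw [Finset.mul_sum]

lemma term2_expand {ι₁ ι₂ κ : Type*} (S : Finset ι₁) (T : Finset ι₂) (L : Finset κ)
    (C : ι₁ → ℝ) (D : ι₂ → ℝ) (px : ι₁ → κ → ℝ) (py : ι₂ → κ → ℝ) (c e : ℝ) :
    ∑ l ∈ L, (c * ∑ i ∈ S, C i * px i l) * (e * ∑ j ∈ T, D j * py j l)
      = ∑ i ∈ S, ∑ j ∈ T, (c * e) * (C i * D j * ∑ l ∈ L, px i l * py j l) := by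
  have h1 : ∀ l ∈ L, (c * ∑ i ∈ S, C i * px i l) * (e * ∑ j ∈ T, D j * py j l)
      = ∑ i ∈ S, ∑ j ∈ T, (c * e) * (C i * px i l * (D j * py j l)) :=
    fun l _ => prod_sum_expand S T _ _ c e
  rw [Finset.sum_congr rfl h1, Finset.sum_comm]
  refine Finset.sum_congr rfl fun i _ => ?_
  rw [Finset.sum_comm]
  refine Finset.sum_congr rfl fun j _ => ?_
  simp only [Finset.mul_sum]
  exact Finset.sum_congr rfl fun l _ => by ring

lemma per_h {ι κ : Type*} (S T : Finset ι) (L : Finset κ) (k p hh α : ℝ)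
    (hk : k * k = hh) (A B C D : ι → ℝ) (px py : ι → κ → ℝ) :
    (k * (p * ∑ i ∈ S, A i)) * (k * (p * ∑ j ∈ T, B j)) +
      (∑ l ∈ L, (k * (α * (p * ∑ i ∈ S, C i * px i l))) *
        (k * (α * (p * ∑ j ∈ T, D j * py j l)))) +
      (k * (α * (p * ∑ i ∈ S, C i))) * (k * (α * (p * ∑ j ∈ T, D j)))
    = ∑ i ∈ S, ∑ j ∈ T, p ^ 2 *
        (hh * (A i * B j + α ^ 2 * C i * D j * (∑ l ∈ L, px i l * py j l + 1))) := by
  have t1 : (k * (p * ∑ i ∈ S, A i)) * (k * (p * ∑ j ∈ T, B j))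
      = ∑ i ∈ S, ∑ j ∈ T, ((k * p) * (k * p)) * (A i * B j) := by
    rw [← mul_assoc k p, ← mul_assoc k p, prod_sum_expand]
  have t2 : (∑ l ∈ L, (k * (α * (p * ∑ i ∈ S, C i * px i l))) *
        (k * (α * (p * ∑ j ∈ T, D j * py j l))))
      = ∑ i ∈ S, ∑ j ∈ T, ((k * (α * p)) * (k * (α * p))) *
          (C i * D j * ∑ l ∈ L, px i l * py j l) := by
    have e1 : ∀ l ∈ L, (k * (α * (p * ∑ i ∈ S, C i * px i l))) *
        (k * (α * (p * ∑ j ∈ T, D j * py j l)))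
        = ((k * (α * p)) * ∑ i ∈ S, C i * px i l) *
          ((k * (α * p)) * ∑ j ∈ T, D j * py j l) := fun l _ => by ring
    rw [Finset.sum_congr rfl e1, term2_expand]
  have t3 : (k * (α * (p * ∑ i ∈ S, C i))) * (k * (α * (p * ∑ j ∈ T, D j)))
      = ∑ i ∈ S, ∑ j ∈ T, ((k * (α * p)) * (k * (α * p))) * (C i * D j) := by
    rw [show k * (α * (p * ∑ i ∈ S, C i)) = (k * (α * p)) * ∑ i ∈ S, C i by ring,
      show k * (α * (p * ∑ j ∈ T, D j)) = (k * (α * p)) * ∑ j ∈ T, D j by ring,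
      prod_sum_expand]
  rw [t1, t2, t3, ← Finset.sum_add_distrib, ← Finset.sum_add_distrib]
  refine Finset.sum_congr rfl fun i _ => ?_
  rw [← Finset.sum_add_distrib, ← Finset.sum_add_distrib]
  refine Finset.sum_congr rfl fun j _ => ?_
  rw [← hk]; ring

lemma hasDerivAt_a (d s H : ℕ) (P : Finset (Fin d)) (σ : ℝ → ℝ)
    (a : Fin H → ℝ) (w : Fin H → Fin s → ℝ) (b : Fin H → ℝ) (x : Fin d → ℝ)
    (h : Fin H) (c0 : ℝ) :
    HasDerivAt (fun c => fCNN d s H P σ (Function.update a h c) w b x)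
      ((1 / Real.sqrt H) * ((1 / (P.card : ℝ)) *
        ∑ i ∈ P, σ (∑ l, w h l * patch d s i.val x l + b h))) c0 := by
  unfold fCNN
  have h1 : HasDerivAt (fun c => ∑ h' : Fin H, Function.update a h c h' *
      ((1 / (P.card : ℝ)) * ∑ i ∈ P, σ (∑ l, w h' l * patch d s i.val x l + b h')))
      (∑ h' : Fin H, (if h' = h then
        (1 / (P.card : ℝ)) * ∑ i ∈ P, σ (∑ l, w h l * patch d s i.val x l + b h) else 0)) c0 := by
    apply HasDerivAt.fun_sum
    intro h' _
    rcases eq_or_ne h' h with rfl | hne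
    · rw [if_pos rfl]
      simp only [Function.update_self]
      simpa using (hasDerivAt_id c0).mul_const
        ((1 / (P.card : ℝ)) * ∑ i ∈ P, σ (∑ l, w h' l * patch d s i.val x l + b h'))
    · rw [if_neg hne]
      simp only [Function.update_of_ne hne]
      exact hasDerivAt_const _ _
  have h2 := h1.const_mul (1 / Real.sqrt H)
  simp only [Finset.sum_ite_eq', Finset.mem_univ, if_true] at h2
  exact h2

lemma hasDerivAt_b (d s H : ℕ) (P : Finset (Fin d)) (σ : ℝ → ℝ) (hσ : Differentiable ℝ σ)
    (a : Fin H → ℝ) (w : Fin H → Fin s → ℝ) (b : Fin H → ℝ) (x : Fin d → ℝ)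
    (h : Fin H) :
    HasDerivAt (fun c => fCNN d s H P σ a w (Function.update b h c) x)
      ((1 / Real.sqrt H) * (a h * ((1 / (P.card : ℝ)) *
        ∑ i ∈ P, deriv σ (∑ l, w h l * patch d s i.val x l + b h)))) (b h) := by
  unfold fCNN
  have h1 : HasDerivAt (fun c => ∑ h' : Fin H, a h' *
      ((1 / (P.card : ℝ)) * ∑ i ∈ P, σ (∑ l, w h' l * patch d s i.val x l + Function.update b h c h')))
      (∑ h' : Fin H, (if h' = h then a h * ((1 / (P.card : ℝ)) *
        ∑ i ∈ P, deriv σ (∑ l, w h l * patch d s i.val x l + b h)) else 0)) (b h) := by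
    apply HasDerivAt.fun_sum
    intro h' _
    rcases eq_or_ne h' h with rfl | hne
    · rw [if_pos rfl]
      simp only [Function.update_self]
      have hin : ∀ i ∈ P, HasDerivAt (fun c => σ (∑ l, w h' l * patch d s i.val x l + c))
          (deriv σ (∑ l, w h' l * patch d s i.val x l + b h')) (b h') := by
        intro i _
        have inner : HasDerivAt (fun c : ℝ => ∑ l, w h' l * patch d s i.val x l + c) 1 (b h') :=
          (hasDerivAt_id (b h')).const_add _
        simpa [Function.comp_def] using ((hσ _).hasDerivAt.comp (b h') inner)
      have hsum := HasDerivAt.fun_sum hin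
      exact (hsum.const_mul ((1 / (P.card : ℝ)))).const_mul (a h')
    · rw [if_neg hne]
      simp only [Function.update_of_ne hne]
      exact hasDerivAt_const _ _
  have h2 := h1.const_mul (1 / Real.sqrt H)
  simp only [Finset.sum_ite_eq', Finset.mem_univ, if_true] at h2
  exact h2

lemma hasDerivAt_w (d s H : ℕ) (P : Finset (Fin d)) (σ : ℝ → ℝ) (hσ : Differentiable ℝ σ)
    (a : Fin H → ℝ) (w : Fin H → Fin s → ℝ) (b : Fin H → ℝ) (x : Fin d → ℝ)
    (h : Fin H) (l : Fin s) :
    HasDerivAt (fun c => fCNN d s H P σ a (Function.update w h (Function.update (w h) l c)) b x)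
      ((1 / Real.sqrt H) * (a h * ((1 / (P.card : ℝ)) *
        ∑ i ∈ P, deriv σ (∑ l', w h l' * patch d s i.val x l' + b h) * patch d s i.val x l)))
      (w h l) := by
  unfold fCNN
  have h1 : HasDerivAt (fun c => ∑ h' : Fin H, a h' *
      ((1 / (P.card : ℝ)) * ∑ i ∈ P,
        σ (∑ l', Function.update w h (Function.update (w h) l c) h' l' * patch d s i.val x l' + b h')))
      (∑ h' : Fin H, (if h' = h then a h * ((1 / (P.card : ℝ)) *
        ∑ i ∈ P, deriv σ (∑ l', w h l' * patch d s i.val x l' + b h) * patch d s i.val x l) else 0))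
      (w h l) := by
    apply HasDerivAt.fun_sum
    intro h' _
    rcases eq_or_ne h' h with rfl | hne
    · rw [if_pos rfl]
      simp only [Function.update_self]
      have hin : ∀ i ∈ P, HasDerivAt
          (fun c => σ (∑ l', Function.update (w h') l c l' * patch d s i.val x l' + b h'))
          (deriv σ (∑ l', w h' l' * patch d s i.val x l' + b h') * patch d s i.val x l)
          (w h' l) := by
        intro i _
        have hsum : HasDerivAt
            (fun c : ℝ => ∑ l' : Fin s, Function.update (w h') l c l' * patch d s i.val x l')
            (∑ l' : Fin s, (if l' = l then patch d s i.val x l else 0)) (w h' l) := by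
          apply HasDerivAt.fun_sum
          intro l' _
          rcases eq_or_ne l' l with rfl | hne'
          · rw [if_pos rfl]
            simp only [Function.update_self]
            simpa using (hasDerivAt_id (w h' l')).mul_const (patch d s i.val x l')
          · rw [if_neg hne']
            simp only [Function.update_of_ne hne']
            exact hasDerivAt_const _ _
        have inner : HasDerivAt
            (fun c : ℝ => ∑ l' : Fin s, Function.update (w h') l c l' * patch d s i.val x l' + b h')
            (patch d s i.val x l) (w h' l) := by
          simpa [Finset.sum_ite_eq', Finset.mem_univ, if_true] using hsum.add_const (b h')
        have hc := (hσ _).hasDerivAt.comp (w h' l) inner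
        simpa [Function.update_eq_self, Function.comp_def] using hc
      have hsum2 := HasDerivAt.fun_sum hin
      exact (hsum2.const_mul ((1 / (P.card : ℝ)))).const_mul (a h')
    · rw [if_neg hne]
      simp only [Function.update_of_ne hne]
      exact hasDerivAt_const _ _
  have h2 := h1.const_mul (1 / Real.sqrt H)
  simp only [Finset.sum_ite_eq', Finset.mem_univ, if_true] at h2
  exact h2

/-- the finite-width NTK of a one-hidden-layer CNN equals the doubly
averaged fully-connected NTK over pairs of patches:
`Θ^CN_N(x,y;θ) = (1/|P|²) Σ_{i,j∈P} Θ^FC_N(x_i, y_j; θ)`. -/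
theorem statement_2
    (d s H : ℕ) (hd : 0 < d) (hs : 0 < s) (hH : 0 < H)
    (P : Finset (Fin d)) (σ : ℝ → ℝ) (hσ : Differentiable ℝ σ)
    (a : Fin H → ℝ) (w : Fin H → Fin s → ℝ) (b : Fin H → ℝ) (x y : Fin d → ℝ) :
    (∑ h : Fin H,
      (deriv (fun c => fCNN d s H P σ (Function.update a h c) w b x) (a h) *
         deriv (fun c => fCNN d s H P σ (Function.update a h c) w b y) (a h) +
       (∑ l : Fin s,
         deriv (fun c =>
             fCNN d s H P σ a (Function.update w h (Function.update (w h) l c)) b x)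
           (w h l) *
         deriv (fun c =>
             fCNN d s H P σ a (Function.update w h (Function.update (w h) l c)) b y)
           (w h l)) +
       deriv (fun c => fCNN d s H P σ a w (Function.update b h c) x) (b h) *
         deriv (fun c => fCNN d s H P σ a w (Function.update b h c) y) (b h)))
    = (1 / (P.card : ℝ) ^ 2) * ∑ i ∈ P, ∑ j ∈ P,
        thetaFC s H σ a w b (patch d s i.val x) (patch d s j.val y) := by
  have hk : (1 / Real.sqrt H) * (1 / Real.sqrt H) = 1 / (H : ℝ) := by
    rw [div_mul_div_comm, one_mul, Real.mul_self_sqrt (Nat.cast_nonneg H)]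
  calc
    (∑ h : Fin H,
      (deriv (fun c => fCNN d s H P σ (Function.update a h c) w b x) (a h) *
         deriv (fun c => fCNN d s H P σ (Function.update a h c) w b y) (a h) +
       (∑ l : Fin s,
         deriv (fun c =>
             fCNN d s H P σ a (Function.update w h (Function.update (w h) l c)) b x)
           (w h l) *
         deriv (fun c =>
             fCNN d s H P σ a (Function.update w h (Function.update (w h) l c)) b y)
           (w h l)) +
       deriv (fun c => fCNN d s H P σ a w (Function.update b h c) x) (b h) *
         deriv (fun c => fCNN d s H P σ a w (Function.update b h c) y) (b h)))
    = ∑ h : Fin H,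
        (((1 / Real.sqrt H) * ((1 / (P.card : ℝ)) *
            ∑ i ∈ P, σ (∑ l, w h l * patch d s i.val x l + b h))) *
          ((1 / Real.sqrt H) * ((1 / (P.card : ℝ)) *
            ∑ j ∈ P, σ (∑ l, w h l * patch d s j.val y l + b h))) +
        (∑ l : Fin s,
          ((1 / Real.sqrt H) * (a h * ((1 / (P.card : ℝ)) *
            ∑ i ∈ P, deriv σ (∑ l', w h l' * patch d s i.val x l' + b h) * patch d s i.val x l))) *
          ((1 / Real.sqrt H) * (a h * ((1 / (P.card : ℝ)) *
            ∑ j ∈ P, deriv σ (∑ l', w h l' * patch d s j.val y l' + b h) * patch d s j.val y l)))) +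
        ((1 / Real.sqrt H) * (a h * ((1 / (P.card : ℝ)) *
            ∑ i ∈ P, deriv σ (∑ l, w h l * patch d s i.val x l + b h)))) *
          ((1 / Real.sqrt H) * (a h * ((1 / (P.card : ℝ)) *
            ∑ j ∈ P, deriv σ (∑ l, w h l * patch d s j.val y l + b h))))) := by
      refine Finset.sum_congr rfl fun h _ => ?_
      have hl : (∑ l : Fin s,
          deriv (fun c =>
              fCNN d s H P σ a (Function.update w h (Function.update (w h) l c)) b x)
            (w h l) *
          deriv (fun c =>
              fCNN d s H P σ a (Function.update w h (Function.update (w h) l c)) b y)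
            (w h l))
          = ∑ l : Fin s,
          ((1 / Real.sqrt H) * (a h * ((1 / (P.card : ℝ)) *
            ∑ i ∈ P, deriv σ (∑ l', w h l' * patch d s i.val x l' + b h) * patch d s i.val x l))) *
          ((1 / Real.sqrt H) * (a h * ((1 / (P.card : ℝ)) *
            ∑ j ∈ P, deriv σ (∑ l', w h l' * patch d s j.val y l' + b h) * patch d s j.val y l))) :=
        Finset.sum_congr rfl fun l _ => by
          rw [(hasDerivAt_w d s H P σ hσ a w b x h l).deriv,
            (hasDerivAt_w d s H P σ hσ a w b y h l).deriv]
      rw [hl, (hasDerivAt_a d s H P σ a w b x h (a h)).deriv,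
        (hasDerivAt_a d s H P σ a w b y h (a h)).deriv,
        (hasDerivAt_b d s H P σ hσ a w b x h).deriv,
        (hasDerivAt_b d s H P σ hσ a w b y h).deriv]
    _ = ∑ h : Fin H, ∑ i ∈ P, ∑ j ∈ P, (1 / (P.card : ℝ)) ^ 2 *
          ((1 / (H : ℝ)) *
            (σ (∑ l, w h l * patch d s i.val x l + b h) *
              σ (∑ l, w h l * patch d s j.val y l + b h) +
            (a h) ^ 2 * deriv σ (∑ l, w h l * patch d s i.val x l + b h) *
              deriv σ (∑ l, w h l * patch d s j.val y l + b h) *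
              (∑ l, patch d s i.val x l * patch d s j.val y l + 1))) :=
      Finset.sum_congr rfl fun h _ =>
        per_h P P Finset.univ (1 / Real.sqrt H) (1 / (P.card : ℝ)) (1 / (H : ℝ)) (a h) hk
          (fun i => σ (∑ l, w h l * patch d s i.val x l + b h))
          (fun j => σ (∑ l, w h l * patch d s j.val y l + b h))
          (fun i => deriv σ (∑ l, w h l * patch d s i.val x l + b h))
          (fun j => deriv σ (∑ l, w h l * patch d s j.val y l + b h))
          (fun i l => patch d s i.val x l) (fun j l => patch d s j.val y l)
    _ = (1 / (P.card : ℝ) ^ 2) * ∑ i ∈ P, ∑ j ∈ P,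
          thetaFC s H σ a w b (patch d s i.val x) (patch d s j.val y) := by
      rw [Finset.sum_comm, Finset.mul_sum]
      refine Finset.sum_congr rfl fun i _ => ?_
      rw [Finset.sum_comm, Finset.mul_sum]
      refine Finset.sum_congr rfl fun j _ => ?_
      unfold thetaFC
      rw [Finset.mul_sum, Finset.mul_sum]
      refine Finset.sum_congr rfl fun h _ => ?_
      rw [one_div_pow]
end
end

section
/- Let s, d be positive integers with d ≥ 2s. For k, q ∈ 2πℤ^s whose first and last components are both nonzero (i.e. k, q ∈ F^s), the following holds on the d-dimensional torus with the uniform measure: ∫_{[0,1]^d} (Σ_{i=1}^d e^{i k·x_i}) (Σ_{j=1}^d e^{-i q·x_j}) dx = d · δ_{k,q}, where x_i denotes the cyclic s-dimensional patch of x starting at position i and δ_{k,q} is 1 if k = q and 0 otherwise. -/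
open MeasureTheory

noncomputable section

/-- The plane wave `e^{i k · z}` on `ℝ^s`, for the wavevector `k = 2πn`. -/
def planeWave (s : ℕ) (n : Fin s → ℤ) (z : Fin s → ℝ) : ℂ :=
  Complex.exp (Complex.I * ((∑ j, 2 * Real.pi * (n j : ℝ) * z j : ℝ) : ℂ))


lemma int_exp (m : ℤ) :
    ∫ x in Set.Icc (0:ℝ) 1, Complex.exp ((Complex.I * (2*Real.pi*(m:ℝ))) * x)
      = if m = 0 then 1 else 0 := by
  rw [MeasureTheory.integral_Icc_eq_integral_Ioc,
    ← intervalIntegral.integral_of_le (by norm_num : (0:ℝ) ≤ 1)]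
  by_cases hm : m = 0
  · simp [hm]
  · rw [integral_exp_mul_complex]
    · rw [if_neg hm]
      simp only [Complex.ofReal_one, Complex.ofReal_zero, mul_one, mul_zero, Complex.exp_zero]
      have h1 : Complex.I * (2*(Real.pi:ℂ)*(m:ℝ)) = (m : ℂ) * (2*Real.pi*Complex.I) := by
        push_cast; ring
      rw [h1, Complex.exp_int_mul_two_pi_mul_I]
      simp
    · simp only [ne_eq, mul_eq_zero, Complex.I_ne_zero, false_or]
      push_cast
      simp [Real.pi_ne_zero, hm]

lemma prod_integral (d : ℕ) (m : Fin d → ℤ) :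
    ∫ x in Set.Icc (0 : Fin d → ℝ) 1,
        ∏ c : Fin d, Complex.exp ((Complex.I * (2*Real.pi*(m c : ℝ))) * x c)
      = if ∀ c, m c = 0 then 1 else 0 := by
  have hind : ∀ x : Fin d → ℝ,
      Set.indicator (Set.Icc (0 : Fin d → ℝ) 1)
        (fun x => ∏ c, Complex.exp ((Complex.I * (2*Real.pi*(m c : ℝ))) * x c)) x
      = ∏ c, (Set.Icc (0:ℝ) 1).indicator
          (fun y => Complex.exp ((Complex.I * (2*Real.pi*(m c : ℝ))) * y)) (x c) := by
    intro x
    by_cases hx : x ∈ Set.Icc (0 : Fin d → ℝ) 1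
    · rw [Set.indicator_of_mem hx]
      have hxc : ∀ c, x c ∈ Set.Icc (0:ℝ) 1 := fun c => ⟨hx.1 c, hx.2 c⟩
      exact Finset.prod_congr rfl fun c _ => (Set.indicator_of_mem (hxc c) (fun y : ℝ => Complex.exp ((Complex.I * (2*Real.pi*(m c : ℝ))) * y))).symm
    · rw [Set.indicator_of_notMem hx]
      obtain ⟨c, hc⟩ : ∃ c, x c ∉ Set.Icc (0:ℝ) 1 := by
        by_contra h
        push_neg at h
        exact hx ⟨fun c => (h c).1, fun c => (h c).2⟩
      exact (Finset.prod_eq_zero (Finset.mem_univ c) (Set.indicator_of_notMem hc (fun y : ℝ => Complex.exp ((Complex.I * (2*Real.pi*(m c : ℝ))) * y)))).symm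
  rw [← MeasureTheory.integral_indicator measurableSet_Icc]
  simp_rw [hind]
  rw [MeasureTheory.integral_fintype_prod_volume_eq_prod
    (fun c y => (Set.Icc (0:ℝ) 1).indicator
      (fun y => Complex.exp ((Complex.I * (2*Real.pi*(m c : ℝ))) * y)) y)]
  simp_rw [MeasureTheory.integral_indicator measurableSet_Icc, int_exp]
  by_cases h : ∀ c, m c = 0
  · simp [h]
  · rw [if_neg h]
    push_neg at h
    obtain ⟨c, hc⟩ := h
    exact Finset.prod_eq_zero (Finset.mem_univ c) (by simp [hc])

def coef (d s : ℕ) (n : Fin s → ℤ) (i : ℕ) (c : Fin d) : ℤ :=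
  ∑ l : Fin s, if (i + l.val) % d = c.val then n l else 0

lemma coef_apply (d s : ℕ) (hd0 : 0 < d) (hsd : s ≤ d) (n : Fin s → ℤ) (i : ℕ) (l : Fin s) :
    coef d s n i ⟨(i + l.val) % d, Nat.mod_lt _ hd0⟩ = n l := by
  unfold coef
  rw [Finset.sum_eq_single l]
  · simp
  · intro b _ hb
    rw [if_neg]
    intro h
    apply hb
    have hmod : b.val ≡ l.val [MOD d] := Nat.ModEq.add_left_cancel' i h
    have hb' : b.val < d := lt_of_lt_of_le b.isLt hsd
    have hl' : l.val < d := lt_of_lt_of_le l.isLt hsd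
    have : b.val = l.val := by
      have := hmod
      unfold Nat.ModEq at this
      rwa [Nat.mod_eq_of_lt hb', Nat.mod_eq_of_lt hl'] at this
    exact Fin.ext this
  · simp

lemma coef_ne_zero_exists (d s : ℕ) (n : Fin s → ℤ) (i : ℕ) (c : Fin d)
    (h : coef d s n i c ≠ 0) : ∃ l : Fin s, (i + l.val) % d = c.val := by
  by_contra hc
  push_neg at hc
  exact h (Finset.sum_eq_zero fun l _ => if_neg (hc l))

lemma coef_neg (d s : ℕ) (n' : Fin s → ℤ) (j : ℕ) (c : Fin d) :
    coef d s (fun l => -(n' l)) j c = - coef d s n' j c := by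
  unfold coef
  rw [← Finset.sum_neg_distrib]
  exact Finset.sum_congr rfl fun l _ => by split <;> simp

lemma coef_eq_of (s d : ℕ) (hs : 0 < s) (hd : 2 * s ≤ d)
    (n n' : Fin s → ℤ)
    (hn1 : n ⟨0, hs⟩ ≠ 0) (hns : n ⟨s - 1, Nat.sub_lt hs one_pos⟩ ≠ 0)
    (i j : Fin d)
    (H : ∀ c : Fin d, coef d s n i.val c = coef d s n' j.val c) :
    i = j ∧ n = n' := by
  have hd0 : 0 < d := by omega
  have hsd : s ≤ d := by omega
  -- the coefficient of coordinate i is n 0 ≠ 0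
  have hc1 : coef d s n i.val ⟨(i.val + (0:ℕ)) % d, Nat.mod_lt _ hd0⟩ = n ⟨0, hs⟩ :=
    coef_apply d s hd0 hsd n i.val ⟨0, hs⟩
  have hc2 : coef d s n i.val ⟨(i.val + (s-1)) % d, Nat.mod_lt _ hd0⟩
      = n ⟨s - 1, Nat.sub_lt hs one_pos⟩ :=
    coef_apply d s hd0 hsd n i.val ⟨s - 1, Nat.sub_lt hs one_pos⟩
  obtain ⟨l, hl⟩ := coef_ne_zero_exists d s n' j.val _ (by rw [← H, hc1]; exact hn1)
  obtain ⟨l', hl'⟩ := coef_ne_zero_exists d s n' j.val _ (by rw [← H, hc2]; exact hns)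
  -- hl : (j + l) % d = (i + 0) % d ; hl' : (j + l') % d = (i + (s-1)) % d
  have hieq : i.val % d = i.val := Nat.mod_eq_of_lt i.isLt
  have hm1 : (j.val + l.val) ≡ i.val [MOD d] := by
    unfold Nat.ModEq
    rw [hl, hieq]
    simp [Nat.mod_eq_of_lt i.isLt]
  have hm2 : (j.val + l'.val) ≡ i.val + (s - 1) [MOD d] := hl'
  have hm3 : (j.val + (l.val + (s - 1))) ≡ (j.val + l'.val) [MOD d] := by
    have := (hm1.add_right (s - 1)).trans hm2.symm
    calc (j.val + (l.val + (s-1))) = (j.val + l.val) + (s-1) := by ring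
    _ ≡ i.val + (s-1) [MOD d] := hm1.add_right _
    _ ≡ (j.val + l'.val) [MOD d] := hm2.symm
  have hcan : (l.val + (s - 1)) ≡ l'.val [MOD d] := Nat.ModEq.add_left_cancel' j.val hm3
  have hls : l.val < s := l.isLt
  have hl's : l'.val < s := l'.isLt
  have heq : l.val + (s - 1) = l'.val := by
    have := hcan
    unfold Nat.ModEq at this
    rwa [Nat.mod_eq_of_lt (by omega), Nat.mod_eq_of_lt (by omega)] at this
  have hl0 : l.val = 0 := by omega
  have hij : i = j := by
    have : (j.val + l.val) % d = i.val := by rw [hl]; simpa using hieq ▸ (by simp [Nat.mod_eq_of_lt i.isLt] : (i.val + 0) % d = i.val)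
    rw [hl0] at this
    simp [Nat.mod_eq_of_lt j.isLt] at this
    exact Fin.ext this.symm
  refine ⟨hij, ?_⟩
  funext l''
  have := H ⟨(i.val + l''.val) % d, Nat.mod_lt _ hd0⟩
  rw [coef_apply d s hd0 hsd n i.val l''] at this
  rw [hij] at this
  rwa [coef_apply d s hd0 hsd n' j.val l''] at this

lemma sum_ite_val {d : ℕ} (hd0 : 0 < d) (a : ℕ) (ha : a < d) (f : Fin d → ℝ) :
    (∑ c : Fin d, if a = c.val then f c else 0) = f ⟨a, ha⟩ := by
  rw [Finset.sum_eq_single (⟨a, ha⟩ : Fin d)]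
  · simp
  · intro b _ hb
    rw [if_neg]
    intro h
    exact hb (Fin.ext h.symm)
  · simp

lemma sum_patch (d s : ℕ) (hd0 : 0 < d) (n : Fin s → ℤ) (i : ℕ) (x : Fin d → ℝ) :
    (∑ l : Fin s, 2 * Real.pi * (n l : ℝ) * x ⟨(i + l.val) % d, Nat.mod_lt _ hd0⟩)
      = ∑ c : Fin d, 2 * Real.pi * ((coef d s n i c : ℤ) : ℝ) * x c := by
  unfold coef
  push_cast
  have : ∀ c : Fin d,
      2 * Real.pi * (∑ l : Fin s, if (i + l.val) % d = c.val then (n l : ℝ) else 0) * x c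
      = ∑ l : Fin s, if (i + l.val) % d = c.val then 2 * Real.pi * (n l : ℝ) * x c else 0 := by
    intro c
    rw [Finset.mul_sum, Finset.sum_mul]
    exact Finset.sum_congr rfl fun l _ => by split <;> simp
  simp_rw [this]
  rw [Finset.sum_comm]
  exact Finset.sum_congr rfl fun l _ =>
    Eq.symm <| sum_ite_val hd0 ((i + l.val) % d) (Nat.mod_lt _ hd0)
      (fun c => 2 * Real.pi * (n l : ℝ) * x c)

lemma wave_eq (d s : ℕ) (hd0 : 0 < d) (n n' : Fin s → ℤ) (i j : ℕ) (x : Fin d → ℝ) :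
    planeWave s n (patch d s i x) * planeWave s (fun l => -(n' l)) (patch d s j x)
      = ∏ c : Fin d, Complex.exp
          ((Complex.I * (2 * Real.pi * (((coef d s n i c - coef d s n' j c : ℤ)) : ℝ))) * x c) := by
  unfold planeWave patch
  simp only [dif_pos hd0]
  rw [← Complex.exp_sum, ← Complex.exp_add]
  congr 1
  rw [sum_patch d s hd0 n i x, sum_patch d s hd0 (fun l => -(n' l)) j x]
  simp_rw [coef_neg]
  push_cast
  rw [Finset.mul_sum, Finset.mul_sum, ← Finset.sum_add_distrib]
  exact Finset.sum_congr rfl fun c _ => by ring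

lemma prod_integrable (d : ℕ) (m : Fin d → ℤ) :
    IntegrableOn
      (fun x : Fin d → ℝ => ∏ c : Fin d, Complex.exp
        ((Complex.I * (2 * Real.pi * ((m c : ℤ) : ℝ))) * x c))
      (Set.Icc (0 : Fin d → ℝ) 1) volume := by
  apply Continuous.integrableOn_Icc
  fun_prop

/-- key overlap computation on the `d`-torus. For wavevectors
`k = 2πn`, `q = 2πn'` in `F^s` (first and last components nonzero),
`∫ (Σ_i e^{ik·x_i})(Σ_j e^{-iq·x_j}) dx = d·δ_{k,q}`. -/
theorem statement_10
    (s d : ℕ) (hs : 0 < s) (hd : 2 * s ≤ d)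
    (n n' : Fin s → ℤ)
    (hn1 : n ⟨0, hs⟩ ≠ 0) (hns : n ⟨s - 1, Nat.sub_lt hs one_pos⟩ ≠ 0)
    (hn'1 : n' ⟨0, hs⟩ ≠ 0) (hn's : n' ⟨s - 1, Nat.sub_lt hs one_pos⟩ ≠ 0) :
    ∫ x in Set.Icc (0 : Fin d → ℝ) 1,
        (∑ i : Fin d, planeWave s n (patch d s i.val x)) *
          (∑ j : Fin d, planeWave s (fun l => -(n' l)) (patch d s j.val x))
      = if n = n' then (d : ℂ) else 0 := by
  have hd0 : 0 < d := by omega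
  have key : ∀ x : Fin d → ℝ,
      (∑ i : Fin d, planeWave s n (patch d s i.val x)) *
        (∑ j : Fin d, planeWave s (fun l => -(n' l)) (patch d s j.val x))
      = ∑ i : Fin d, ∑ j : Fin d,
          ∏ c : Fin d, Complex.exp
            ((Complex.I * (2 * Real.pi *
              (((coef d s n i.val c - coef d s n' j.val c : ℤ)) : ℝ))) * x c) := by
    intro x
    rw [Finset.sum_mul_sum]
    exact Finset.sum_congr rfl fun i _ => Finset.sum_congr rfl fun j _ =>
      wave_eq d s hd0 n n' i.val j.val x
  simp_rw [key]
  rw [MeasureTheory.integral_finset_sum]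
  swap
  · exact fun i _ => MeasureTheory.integrable_finset_sum _ (fun j _ =>
      prod_integrable d (fun c => coef d s n i.val c - coef d s n' j.val c))
  have step : ∀ i : Fin d,
      (∫ x in Set.Icc (0 : Fin d → ℝ) 1, ∑ j : Fin d,
        ∏ c : Fin d, Complex.exp
          ((Complex.I * (2 * Real.pi *
            (((coef d s n i.val c - coef d s n' j.val c : ℤ)) : ℝ))) * x c))
      = ∑ j : Fin d, if (i = j ∧ n = n') then (1 : ℂ) else 0 := by
    intro i
    rw [MeasureTheory.integral_finset_sum]
    swap
    · exact fun j _ => prod_integrable d (fun c => coef d s n i.val c - coef d s n' j.val c)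
    refine Finset.sum_congr rfl fun j _ => ?_
    rw [prod_integral d (fun c => coef d s n i.val c - coef d s n' j.val c)]
    congr 1
    simp only [eq_iff_iff]
    constructor
    · intro h
      exact coef_eq_of s d hs hd n n' hn1 hns i j (fun c => by have := h c; omega)
    · rintro ⟨rfl, rfl⟩ c
      omega
  simp_rw [step]
  by_cases hnn : n = n'
  · simp [hnn, Finset.sum_ite_eq]
  · simp [hnn]
end
end

section
/- Let A > 0 and a > 1, and set λ_ρ = A ρ^{-a} for integers ρ ≥ 1. For every real P ≥ 1 there exists a unique ν(P) > 0 such that Σ_{ρ=1}^∞ λ_ρ/(λ_ρ + ν(P)) = P, and there exists a constant C > 0 such that lim_{P→∞} P^a ν(P) = C; explicitly, C = (A^{1/a} · π/(a sin(π/a)))^a. In particular ν(P) = Θ(P^{-a}) as P → ∞. -/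
open Filter Real Set MeasureTheory

lemma realBeta {t : ℝ} (h0 : 0 < t) (h1 : t < 1) :
    ∫ x in (0:ℝ)..1, x ^ (t - 1) * (1 - x) ^ (-t) = π / Real.sin (π * t) := by
  have h2 : (0:ℝ) < 1 - t := by linarith
  have key := Complex.Gamma_mul_Gamma_eq_betaIntegral
    (s := (t : ℂ)) (t := ((1 - t : ℝ) : ℂ)) (by simpa using h0) (by simpa using h2)
  have hsum : (t : ℂ) + ((1 - t : ℝ) : ℂ) = 1 := by push_cast; ring
  rw [hsum, Complex.Gamma_one, one_mul, Complex.Gamma_ofReal, Complex.Gamma_ofReal,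
    ← Complex.ofReal_mul, Real.Gamma_mul_Gamma_one_sub] at key
  have hbeta : Complex.betaIntegral (t : ℂ) ((1 - t : ℝ) : ℂ)
      = ((∫ x in (0:ℝ)..1, x ^ (t - 1) * (1 - x) ^ (-t) : ℝ) : ℂ) := by
    rw [Complex.betaIntegral, ← intervalIntegral.integral_ofReal]
    apply intervalIntegral.integral_congr
    intro x hx
    rw [Set.uIcc_of_le (zero_le_one' ℝ)] at hx
    have hx0 : (0:ℝ) ≤ x := hx.1
    have hx1 : (0:ℝ) ≤ 1 - x := by linarith [hx.2]
    have e1 : ((t:ℂ) - 1) = ((t - 1 : ℝ) : ℂ) := by push_cast; ring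
    have e2 : (((1 - t : ℝ):ℂ) - 1) = ((-t : ℝ) : ℂ) := by push_cast; ring
    have e3 : (1 - (x:ℂ)) = ((1 - x : ℝ) : ℂ) := by push_cast; ring
    dsimp only
    rw [e1, e2, e3, ← Complex.ofReal_cpow hx0, ← Complex.ofReal_cpow hx1,
      ← Complex.ofReal_mul]
  rw [hbeta] at key
  exact_mod_cast key.symm

lemma J_eval {t : ℝ} (h0 : 0 < t) (h1 : t < 1) :
    ∫ u in Ioi (0:ℝ), u ^ (t - 1) / (1 + u) = π / Real.sin (π * t) := by
  set φ : ℝ → ℝ := fun u => u / (1 + u) with hφ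
  have hderiv : ∀ u ∈ Ioi (0:ℝ), HasDerivWithinAt φ (((1 + u) ^ 2)⁻¹) (Ioi 0) u := by
    intro u hu
    have hu0 : (0:ℝ) < u := hu
    have h1u : (1 + u) ≠ 0 := by positivity
    have := (hasDerivAt_id u).div ((hasDerivAt_const u 1).add (hasDerivAt_id u)) h1u
    refine this.hasDerivWithinAt.congr_deriv ?_
    simp only [Pi.add_apply, id]; ring
  have hinj : InjOn φ (Ioi 0) := by
    intro u hu v hv h
    have hu0 : (0:ℝ) < u := hu
    have hv0 : (0:ℝ) < v := hv
    have h1u : (1 + u) ≠ 0 := by positivity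
    have h1v : (1 + v) ≠ 0 := by positivity
    have := (div_eq_div_iff h1u h1v).mp h
    nlinarith
  have himg : φ '' Ioi 0 = Ioo 0 1 := by
    ext y
    constructor
    · rintro ⟨u, hu, rfl⟩
      have hu0 : (0:ℝ) < u := hu
      have h1u : (0:ℝ) < 1 + u := by positivity
      exact ⟨div_pos hu0 h1u, (div_lt_one h1u).mpr (by linarith)⟩
    · rintro ⟨hy0, hy1⟩
      refine ⟨y / (1 - y), div_pos hy0 (by linarith), ?_⟩
      have h1y : (1 - y) ≠ 0 := by linarith
      simp only [hφ]
      have h2 : 1 + y / (1 - y) = 1 / (1 - y) := by field_simp; ring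
      rw [h2]; field_simp
  have key := integral_image_eq_integral_abs_deriv_smul measurableSet_Ioi hderiv hinj
    (fun x => x ^ (t - 1) * (1 - x) ^ (-t))
  rw [himg] at key
  have hIoo : ∫ x in Ioo (0:ℝ) 1, x ^ (t - 1) * (1 - x) ^ (-t) = π / Real.sin (π * t) := by
    rw [← MeasureTheory.integral_Ioc_eq_integral_Ioo, ← intervalIntegral.integral_of_le zero_le_one]
    exact realBeta h0 h1
  rw [hIoo] at key
  rw [key]
  apply setIntegral_congr_fun measurableSet_Ioi
  intro u hu
  have hu0 : (0:ℝ) < u := hu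
  have hc : (0:ℝ) < 1 + u := by positivity
  have e1 : (1:ℝ) - φ u = (1 + u)⁻¹ := by simp only [hφ]; field_simp; ring
  have e2 : (φ u) ^ (t - 1) = u ^ (t - 1) * (1 + u) ^ (1 - t) := by
    simp only [hφ]
    rw [Real.div_rpow hu0.le hc.le, div_eq_mul_inv, ← Real.rpow_neg hc.le]
    ring_nf
  have e3 : ((1 + u)⁻¹ : ℝ) ^ (-t) = (1 + u) ^ t := by
    rw [Real.inv_rpow hc.le, Real.rpow_neg hc.le, inv_inv]
  have e4 : (1 + u) ^ (1 - t) * (1 + u) ^ t = 1 + u := by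
    rw [← Real.rpow_add hc]; simp
  simp only [smul_eq_mul]
  rw [e1, e2, e3, abs_of_nonneg (by positivity : (0:ℝ) ≤ ((1 + u) ^ 2)⁻¹),
    mul_assoc (u ^ (t - 1)), e4]
  field_simp

lemma I_eval {a : ℝ} (ha : 1 < a) :
    ∫ u in Ioi (0:ℝ), (1 + u ^ a)⁻¹ = π / (a * Real.sin (π / a)) := by
  have ha0 : (0:ℝ) < a := lt_trans one_pos ha
  have hs0 : (0:ℝ) < 1 / a := by positivity
  have hs1 : 1 / a < 1 := by rw [div_lt_one ha0]; exact ha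
  have key := integral_comp_rpow_Ioi (fun u => (1 + u ^ a)⁻¹) (p := 1 / a) (ne_of_gt hs0)
  rw [← key]
  have congr1 : ∀ x ∈ Ioi (0:ℝ),
      (|1 / a| * x ^ (1 / a - 1)) • (1 + (x ^ (1 / a)) ^ a)⁻¹
        = (1 / a) * (x ^ (1 / a - 1) / (1 + x)) := by
    intro x hx
    have hx0 : (0:ℝ) < x := hx
    have : (x ^ (1 / a)) ^ a = x := by
      rw [← Real.rpow_mul hx0.le, one_div_mul_cancel (ne_of_gt ha0), Real.rpow_one]
    rw [this, smul_eq_mul, abs_of_nonneg hs0.le]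
    ring
  rw [setIntegral_congr_fun measurableSet_Ioi congr1, MeasureTheory.integral_const_mul,
    J_eval hs0 hs1]
  rw [div_mul_div_comm, one_mul]
  congr 1
  rw [mul_one_div]

lemma f_contOn {a : ℝ} (ha0 : 0 < a) :
    ContinuousOn (fun u : ℝ => (1 + u ^ a)⁻¹) (Ici 0) := by
  apply ContinuousOn.inv₀
  · exact continuousOn_const.add
      (fun x _ => (Real.continuousAt_rpow_const x a (Or.inr ha0.le)).continuousWithinAt)
  · intro x hx
    have : (0:ℝ) ≤ x ^ a := Real.rpow_nonneg hx a
    positivity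

lemma f_integrable {a : ℝ} (ha : 1 < a) :
    IntegrableOn (fun u : ℝ => (1 + u ^ a)⁻¹) (Ioi 0) := by
  have ha0 : (0:ℝ) < a := lt_trans one_pos ha
  have h1 : IntegrableOn (fun u : ℝ => (1 + u ^ a)⁻¹) (Ioc 0 1) :=
    (((f_contOn ha0).mono Icc_subset_Ici_self).integrableOn_Icc).mono_set Ioc_subset_Icc_self
  have h2 : IntegrableOn (fun u : ℝ => (1 + u ^ a)⁻¹) (Ioi 1) := by
    apply Integrable.mono' (integrableOn_Ioi_rpow_of_lt (by linarith : -a < -1) one_pos)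
    · exact ((f_contOn ha0).mono (t := Ioi (1:ℝ))
        (fun x hx => mem_Ici.mpr (le_of_lt (lt_trans one_pos hx)))).aestronglyMeasurable measurableSet_Ioi
    · refine (ae_restrict_iff' measurableSet_Ioi).mpr (ae_of_all _ fun x hx => ?_)
      have hx0 : (0:ℝ) < x := lt_trans one_pos hx
      have hxa : (0:ℝ) < x ^ a := Real.rpow_pos_of_pos hx0 a
      rw [Real.norm_eq_abs, abs_of_nonneg (by positivity), Real.rpow_neg hx0.le]
      exact inv_anti₀ hxa (by linarith)
  have h3 := h1.union h2
  rwa [Ioc_union_Ioi_eq_Ioi zero_le_one] at h3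

lemma sandwich {a b : ℝ} (ha : 1 < a) (hb : 0 < b) :
    Summable (fun k : ℕ => (1 + (b * (k:ℝ) + b) ^ a)⁻¹) ∧
    (∫ u in Ioi (0:ℝ), (1 + u ^ a)⁻¹) - b ≤ b * ∑' k : ℕ, (1 + (b * (k:ℝ) + b) ^ a)⁻¹ ∧
    b * ∑' k : ℕ, (1 + (b * (k:ℝ) + b) ^ a)⁻¹ ≤ ∫ u in Ioi (0:ℝ), (1 + u ^ a)⁻¹ := by
  have ha0 : (0:ℝ) < a := lt_trans one_pos ha
  set f : ℝ → ℝ := fun u => (1 + u ^ a)⁻¹ with hfdef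
  have hfanti : ∀ x y : ℝ, 0 ≤ x → x ≤ y → f y ≤ f x := by
    intro x y hx hxy
    have h1 : x ^ a ≤ y ^ a := Real.rpow_le_rpow hx hxy ha0.le
    have h2 : (0:ℝ) < 1 + x ^ a := by
      have := Real.rpow_nonneg hx a; linarith
    exact inv_anti₀ h2 (by linarith)
  have hfnonneg : ∀ x : ℝ, 0 ≤ x → 0 ≤ f x := by
    intro x hx; have := Real.rpow_nonneg hx a; positivity
  have hfbound : ∀ x : ℝ, 0 < x → f x ≤ x ^ (-a) := by
    intro x hx
    have hxa : (0:ℝ) < x ^ a := Real.rpow_pos_of_pos hx a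
    rw [Real.rpow_neg hx.le]
    exact inv_anti₀ hxa (by linarith)
  set T : ℕ → Set ℝ := fun k => Ioc (b * (k:ℝ)) (b * (k:ℝ) + b) with hTdef
  have hTmeas : ∀ k, MeasurableSet (T k) := fun k => measurableSet_Ioc
  have hTsub : ∀ k, T k ⊆ Ioi (0:ℝ) := by
    intro k x hx
    have h0 : (0:ℝ) ≤ b * (k:ℝ) := by positivity
    exact lt_of_le_of_lt h0 hx.1
  have hTdisj : Pairwise (Function.onFun Disjoint T) := by
    have key : ∀ i j : ℕ, i < j → Disjoint (T i) (T j) := by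
      intro i j hij
      apply Set.Ioc_disjoint_Ioc.mpr
      have h1 : b * (i:ℝ) + b ≤ b * (j:ℝ) := by
        have : ((i:ℝ) + 1) ≤ (j:ℝ) := by exact_mod_cast Nat.succ_le_of_lt hij
        nlinarith
      calc min (b * (i:ℝ) + b) (b * (j:ℝ) + b) ≤ b * (i:ℝ) + b := min_le_left _ _
        _ ≤ b * (j:ℝ) := h1
        _ ≤ max (b * (i:ℝ)) (b * (j:ℝ)) := le_max_right _ _
    intro i j hij
    rcases hij.lt_or_gt with h | h
    · exact key i j h
    · exact (key j i h).symm
  have hTunion : (⋃ k, T k) = Ioi (0:ℝ) := by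
    apply Set.Subset.antisymm (Set.iUnion_subset hTsub)
    intro x hx
    have hx0 : (0:ℝ) < x := hx
    have hxb : (0:ℝ) < x / b := div_pos hx0 hb
    set n := ⌈x / b⌉₊ with hn
    have hn1 : 1 ≤ n := Nat.ceil_pos.mpr hxb
    have hcast : (((n - 1 : ℕ)):ℝ) = (n:ℝ) - 1 := by
      rw [Nat.cast_sub hn1, Nat.cast_one]
    refine Set.mem_iUnion.mpr ⟨n - 1, ?_, ?_⟩
    · show b * ((n - 1 : ℕ):ℝ) < x
      rw [hcast]
      have h1 : (n:ℝ) - 1 < x / b := by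
        have := Nat.ceil_lt_add_one hxb.le
        rw [← hn] at this
        linarith
      calc b * ((n:ℝ) - 1) < b * (x / b) := by
            exact mul_lt_mul_of_pos_left h1 hb
        _ = x := by field_simp
    · show x ≤ b * ((n - 1 : ℕ):ℝ) + b
      rw [hcast]
      have h2 : x / b ≤ (n:ℝ) := Nat.le_ceil _
      calc x = b * (x / b) := by field_simp
        _ ≤ b * (n:ℝ) := mul_le_mul_of_nonneg_left h2 hb.le
        _ = b * ((n:ℝ) - 1) + b := by ring
  have hint : ∀ k, IntegrableOn f (T k) := fun k => (f_integrable ha).mono_set (hTsub k)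
  have hvol : ∀ k, volume (T k) = ENNReal.ofReal b := by
    intro k
    rw [hTdef]
    simp only [Real.volume_Ioc]
    congr 1
    ring
  have hSum := MeasureTheory.hasSum_integral_iUnion hTmeas hTdisj
    (by rw [hTunion]; exact f_integrable ha)
  rw [hTunion] at hSum
  have hconstint : ∀ (k : ℕ) (c : ℝ), IntegrableOn (fun _ : ℝ => c) (T k) := by
    intro k c
    apply (integrableOn_const_iff (C := c)).mpr
    right
    rw [hvol k]
    exact ENNReal.ofReal_lt_top
  have hlow : ∀ k : ℕ, b * f (b * (k:ℝ) + b) ≤ ∫ x in T k, f x := by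
    intro k
    have hmono := setIntegral_mono_on (hconstint k (f (b * (k:ℝ) + b))) (hint k) (hTmeas k)
      (fun x hx => hfanti x (b * (k:ℝ) + b) (le_of_lt (hTsub k hx)) hx.2)
    rwa [setIntegral_const, measureReal_def, hvol k, ENNReal.toReal_ofReal hb.le, smul_eq_mul] at hmono
  have hup : ∀ k : ℕ, (∫ x in T k, f x) ≤ b * f (b * (k:ℝ)) := by
    intro k
    have hmono := setIntegral_mono_on (hint k) (hconstint k (f (b * (k:ℝ)))) (hTmeas k)
      (fun x hx => hfanti (b * (k:ℝ)) x (by positivity) hx.1.le)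
    rwa [setIntegral_const, measureReal_def, hvol k, ENNReal.toReal_ofReal hb.le, smul_eq_mul] at hmono
  have hmaj : Summable (fun k : ℕ => b ^ (-a) * ((k:ℝ) + 1) ^ (-a)) := by
    have h0 : Summable (fun n : ℕ => ((n:ℝ)) ^ (-a)) :=
      Real.summable_nat_rpow.mpr (by linarith)
    have h1 := (summable_nat_add_iff 1).mpr h0
    have h2 : (fun n : ℕ => (((n + 1 : ℕ)):ℝ) ^ (-a)) = (fun n : ℕ => ((n:ℝ) + 1) ^ (-a)) := by
      funext n; push_cast; ring_nf
    rw [h2] at h1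
    exact h1.mul_left _
  have hsummable : Summable (fun k : ℕ => f (b * (k:ℝ) + b)) := by
    apply Summable.of_nonneg_of_le (fun k => hfnonneg _ (by positivity)) (fun k => ?_) hmaj
    have hbk : (0:ℝ) < b * (k:ℝ) + b := by positivity
    calc f (b * (k:ℝ) + b) ≤ (b * (k:ℝ) + b) ^ (-a) := hfbound _ hbk
      _ = (b * ((k:ℝ) + 1)) ^ (-a) := by ring_nf
      _ = b ^ (-a) * ((k:ℝ) + 1) ^ (-a) := Real.mul_rpow hb.le (by positivity)
  refine ⟨hsummable, ?_, ?_⟩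
  · -- lower bound : I - b ≤ b * Σ
    have hshift : Summable (fun k : ℕ => b * f (b * (k:ℝ))) := by
      apply (summable_nat_add_iff 1).mp
      have : (fun n : ℕ => b * f (b * (((n + 1 : ℕ)):ℝ))) = (fun n : ℕ => b * f (b * (n:ℝ) + b)) := by
        funext n; push_cast; ring_nf
      rw [this]
      exact hsummable.mul_left b
    have hle : (∫ u in Ioi (0:ℝ), (1 + u ^ a)⁻¹) ≤ ∑' k : ℕ, b * f (b * (k:ℝ)) := by
      rw [← hSum.tsum_eq]
      exact Summable.tsum_le_tsum hup hSum.summable hshift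
    have hsplit : ∑' k : ℕ, b * f (b * (k:ℝ)) = b + b * ∑' k : ℕ, f (b * (k:ℝ) + b) := by
      have hz : b * f (b * ((0:ℕ):ℝ)) = b := by
        simp only [Nat.cast_zero, mul_zero, hfdef]
        rw [Real.zero_rpow (ne_of_gt ha0)]
        norm_num
      have hsh : (fun n : ℕ => b * f (b * (((n + 1 : ℕ)):ℝ))) = (fun n : ℕ => b * f (b * (n:ℝ) + b)) := by
        funext n; push_cast; ring_nf
      rw [Summable.tsum_eq_zero_add hshift, hz, hsh, ← tsum_mul_left]
    rw [hsplit] at hle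
    linarith
  · -- upper bound : b * Σ ≤ I
    rw [← hSum.tsum_eq, ← tsum_mul_left]
    exact Summable.tsum_le_tsum hlow (hsummable.mul_left b) hSum.summable

lemma pnat_tsum_eq (g : ℝ → ℝ) :
    ∑' ρ : ℕ+, g ((ρ : ℕ) : ℝ) = ∑' k : ℕ, g ((k : ℝ) + 1) := by
  rw [← Equiv.tsum_eq Equiv.pnatEquivNat.symm (fun ρ : ℕ+ => g ((ρ : ℕ) : ℝ))]
  congr 1
  funext k
  simp [Nat.succPNat_coe]

lemma pnat_summable_iff (g : ℝ → ℝ) :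
    Summable (fun ρ : ℕ+ => g ((ρ : ℕ) : ℝ)) ↔ Summable (fun k : ℕ => g ((k : ℝ) + 1)) := by
  rw [← Equiv.summable_iff Equiv.pnatEquivNat.symm (f := fun ρ : ℕ+ => g ((ρ : ℕ) : ℝ))]
  constructor <;> intro h <;> refine h.congr (fun k => ?_) <;>
    simp [Function.comp, Nat.succPNat_coe]

lemma term_eq {A a v : ℝ} (hA : 0 < A) (ha0 : 0 < a) (hv : 0 < v) (x : ℝ) (hx : 0 < x) :
    (A * x ^ (-a)) / (A * x ^ (-a) + v) = (1 + ((v / A) ^ (1 / a) * x) ^ a)⁻¹ := by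
  have hb : (0:ℝ) < (v / A) ^ (1 / a) := Real.rpow_pos_of_pos (div_pos hv hA) _
  have hR : (0:ℝ) < x ^ a := Real.rpow_pos_of_pos hx a
  have e1 : ((v / A) ^ (1 / a) * x) ^ a = (v / A) * x ^ a := by
    rw [Real.mul_rpow hb.le hx.le, ← Real.rpow_mul (div_pos hv hA).le,
      one_div_mul_cancel ha0.ne', Real.rpow_one]
  rw [e1, Real.rpow_neg hx.le]
  have hd : A * (x ^ a)⁻¹ + v ≠ 0 := by positivity
  have hd2 : 1 + v / A * x ^ a ≠ 0 := by positivity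
  field_simp

lemma lam_pos {A a : ℝ} (hA : 0 < A) (ρ : ℕ+) : 0 < A * ((ρ:ℕ):ℝ) ^ (-a) := by
  have hρ : (0:ℝ) < ((ρ:ℕ):ℝ) := by exact_mod_cast ρ.pos
  exact mul_pos hA (Real.rpow_pos_of_pos hρ _)

lemma lam_summable {A a : ℝ} (ha : 1 < a) :
    Summable (fun ρ : ℕ+ => A * ((ρ:ℕ):ℝ) ^ (-a)) := by
  have h0 : Summable (fun n : ℕ => ((n:ℝ)) ^ (-a)) :=
    Real.summable_nat_rpow.mpr (by linarith)
  have h1 := (summable_nat_add_iff 1).mpr h0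
  have h2 : Summable (fun n : ℕ => A * ((n:ℝ) + 1) ^ (-a)) := by
    apply Summable.mul_left
    exact h1.congr (fun n => by push_cast; ring_nf)
  exact (pnat_summable_iff (fun x => A * x ^ (-a))).mpr h2

lemma F_summable {A a v : ℝ} (hA : 0 < A) (ha : 1 < a) (hv : 0 < v) :
    Summable (fun ρ : ℕ+ => (A * ((ρ:ℕ):ℝ) ^ (-a)) / (A * ((ρ:ℕ):ℝ) ^ (-a) + v)) := by
  refine Summable.of_nonneg_of_le (fun ρ => ?_) (fun ρ => ?_)
    ((lam_summable (A := A) ha).div_const v)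
  · have h := lam_pos (a := a) hA ρ
    positivity
  · have h := lam_pos (a := a) hA ρ
    exact div_le_div_of_nonneg_left h.le hv (by linarith)

lemma F_anti {A a v w : ℝ} (hA : 0 < A) (ha : 1 < a) (hv : 0 < v) (hvw : v < w) :
    ∑' ρ : ℕ+, (A * ((ρ:ℕ):ℝ) ^ (-a)) / (A * ((ρ:ℕ):ℝ) ^ (-a) + w)
      < ∑' ρ : ℕ+, (A * ((ρ:ℕ):ℝ) ^ (-a)) / (A * ((ρ:ℕ):ℝ) ^ (-a) + v) := by
  have hw : 0 < w := lt_trans hv hvw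
  refine Summable.tsum_lt_tsum (i := 1) (fun ρ => ?_) ?_ (F_summable hA ha hw) (F_summable hA ha hv)
  · have h := lam_pos (a := a) hA ρ
    exact div_le_div_of_nonneg_left h.le (by linarith) (by linarith)
  · have h := lam_pos (a := a) hA 1
    exact div_lt_div_of_pos_left h (by linarith) (by linarith)

lemma F_contOn {A a v1 v2 : ℝ} (hA : 0 < A) (ha : 1 < a) (hv1 : 0 < v1) :
    ContinuousOn (fun v => ∑' ρ : ℕ+, (A * ((ρ:ℕ):ℝ) ^ (-a)) / (A * ((ρ:ℕ):ℝ) ^ (-a) + v))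
      (Icc v1 v2) := by
  apply continuousOn_tsum (u := fun ρ : ℕ+ => (A * ((ρ:ℕ):ℝ) ^ (-a)) / v1)
  · intro ρ
    have h := lam_pos (a := a) hA ρ
    exact continuousOn_const.div (continuousOn_const.add continuousOn_id)
      (fun v hv => ne_of_gt (by have h2 := hv.1; linarith))
  · exact (lam_summable ha).div_const v1
  · intro ρ v hv
    have h := lam_pos (a := a) hA ρ
    have h2 : (0:ℝ) < A * ((ρ:ℕ):ℝ) ^ (-a) + v := by linarith [hv.1]
    rw [Real.norm_eq_abs, abs_of_nonneg (by positivity)]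
    exact div_le_div_of_nonneg_left h.le hv1 (by linarith [hv.1])

lemma exists_unique_sol {A a : ℝ} (hA : 0 < A) (ha : 1 < a) {P : ℝ} (hP : 1 ≤ P) :
    ∃! v : ℝ, 0 < v ∧
      ∑' ρ : ℕ+, (A * ((ρ:ℕ):ℝ) ^ (-a)) / (A * ((ρ:ℕ):ℝ) ^ (-a) + v) = P := by
  set F : ℝ → ℝ :=
    fun v => ∑' ρ : ℕ+, (A * ((ρ:ℕ):ℝ) ^ (-a)) / (A * ((ρ:ℕ):ℝ) ^ (-a) + v) with hF
  set S : ℝ := ∑' ρ : ℕ+, A * ((ρ:ℕ):ℝ) ^ (-a) with hS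
  have hSpos : 0 < S := Summable.tsum_pos (lam_summable ha) (fun ρ => (lam_pos hA ρ).le) 1 (lam_pos hA 1)
  have hFS : F S ≤ P := by
    have h1 : F S ≤ ∑' ρ : ℕ+, (A * ((ρ:ℕ):ℝ) ^ (-a)) / S := by
      apply Summable.tsum_le_tsum (fun ρ => ?_) (F_summable hA ha hSpos) ((lam_summable ha).div_const S)
      have h := lam_pos (a := a) hA ρ
      exact div_le_div_of_nonneg_left h.le hSpos (by linarith)
    rw [tsum_div_const, ← hS, div_self hSpos.ne'] at h1
    linarith
  obtain ⟨N, hN⟩ := exists_nat_ge (2 * P)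
  set M : ℕ := N + 1 with hM
  set v1 : ℝ := A * ((M:ℝ)) ^ (-a) with hv1
  have hMpos : (0:ℝ) < (M:ℝ) := by positivity
  have hv1pos : 0 < v1 := mul_pos hA (Real.rpow_pos_of_pos hMpos _)
  have hFv1 : P ≤ F v1 := by
    set s : Finset ℕ+ := (Finset.range M).map ⟨Nat.succPNat, Nat.succPNat_injective⟩ with hs
    have hterm : ∀ ρ ∈ s, (1:ℝ)/2 ≤ (A * ((ρ:ℕ):ℝ) ^ (-a)) / (A * ((ρ:ℕ):ℝ) ^ (-a) + v1) := by
      intro ρ hρ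
      obtain ⟨k, hk, rfl⟩ := Finset.mem_map.mp hρ
      simp only [Function.Embedding.coeFn_mk]
      have hk' : (k:ℕ) < M := Finset.mem_range.mp hk
      have hcoe : (((Nat.succPNat k : ℕ+):ℕ):ℝ) = (k:ℝ) + 1 := by
        simp [Nat.succPNat_coe]
      have hkM : (k:ℝ) + 1 ≤ (M:ℝ) := by exact_mod_cast Nat.succ_le_of_lt hk'
      have hkpos : (0:ℝ) < (k:ℝ) + 1 := by positivity
      set lam : ℝ := A * ((k:ℝ) + 1) ^ (-a) with hlam
      have hlampos : 0 < lam := mul_pos hA (Real.rpow_pos_of_pos hkpos _)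
      have hv1lam : v1 ≤ lam := by
        apply mul_le_mul_of_nonneg_left _ hA.le
        rw [Real.rpow_neg hMpos.le, Real.rpow_neg hkpos.le]
        exact inv_anti₀ (Real.rpow_pos_of_pos hkpos _)
          (Real.rpow_le_rpow hkpos.le hkM (by linarith))
      rw [hcoe]
      have h2 : lam / (2 * lam) = 1/2 := by
        rw [mul_comm, ← div_div, div_self hlampos.ne']
      rw [← h2]
      exact div_le_div_of_nonneg_left hlampos.le (by linarith) (by linarith)
    have hcard : (s.card : ℝ) = (M:ℝ) := by
      rw [hs, Finset.card_map, Finset.card_range]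
    have hsum : (M:ℝ) * (1/2) ≤ ∑ ρ ∈ s, (A * ((ρ:ℕ):ℝ) ^ (-a)) / (A * ((ρ:ℕ):ℝ) ^ (-a) + v1) := by
      have := Finset.card_nsmul_le_sum s _ _ hterm
      rwa [nsmul_eq_mul, hcard] at this
    have hPM : P ≤ (M:ℝ) * (1/2) := by
      have : ((N:ℝ)) + 1 = (M:ℝ) := by exact_mod_cast rfl
      linarith
    have htsum := Summable.sum_le_tsum s (fun ρ _ => by
        have h := lam_pos (a := a) hA ρ
        positivity) (F_summable hA ha hv1pos)
    calc P ≤ (M:ℝ) * (1/2) := hPM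
      _ ≤ _ := hsum
      _ ≤ F v1 := htsum
  have key : ∃ v ∈ Icc (min v1 S) (max v1 S), F v = P := by
    rcases le_total v1 S with h | h
    · have hsub := intermediate_value_Icc' h (F_contOn hA ha hv1pos)
      have : P ∈ Icc (F S) (F v1) := ⟨hFS, hFv1⟩
      obtain ⟨v, hv, hFv⟩ := hsub this
      exact ⟨v, by rwa [min_eq_left h, max_eq_right h], hFv⟩
    · have hsub := intermediate_value_Icc h (F_contOn hA ha hSpos)
      have : P ∈ Icc (F S) (F v1) := ⟨hFS, hFv1⟩
      obtain ⟨v, hv, hFv⟩ := hsub this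
      exact ⟨v, by rwa [min_eq_right h, max_eq_left h], hFv⟩
  obtain ⟨v, hv, hFv⟩ := key
  have hvpos : 0 < v := lt_of_lt_of_le (lt_min hv1pos hSpos) hv.1
  refine ⟨v, ⟨hvpos, hFv⟩, ?_⟩
  rintro w ⟨hwpos, hFw⟩
  have hFw' : F w = P := hFw
  by_contra hne
  rcases lt_or_gt_of_ne hne with h | h
  · have h2 : F v < F w := F_anti hA ha hwpos h
    rw [hFw', hFv] at h2
    exact lt_irrefl P h2
  · have h2 : F w < F v := F_anti hA ha hvpos h
    rw [hFw', hFv] at h2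
    exact lt_irrefl P h2


/-- the ridgeless self-consistent equation for a power-law spectrum
`λ_ρ = Aρ^{-a}`: for each `P ≥ 1` there is a unique `ν(P) > 0` with
`Σ_ρ λ_ρ/(λ_ρ + ν(P)) = P`, and `P^a ν(P) → C = (A^{1/a} π/(a sin(π/a)))^a > 0`. -/
theorem statement_14 (A a : ℝ) (hA : 0 < A) (ha : 1 < a) :
    (∀ P : ℝ, 1 ≤ P → ∃! v : ℝ, 0 < v ∧
      ∑' ρ : ℕ+, (A * ((ρ : ℕ) : ℝ) ^ (-a)) / (A * ((ρ : ℕ) : ℝ) ^ (-a) + v) = P) ∧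
    0 < (A ^ (1 / a) * π / (a * Real.sin (π / a))) ^ a ∧
    ∀ ν : ℝ → ℝ,
      (∀ P : ℝ, 1 ≤ P → 0 < ν P ∧
        ∑' ρ : ℕ+, (A * ((ρ : ℕ) : ℝ) ^ (-a)) / (A * ((ρ : ℕ) : ℝ) ^ (-a) + ν P) = P) →
      Tendsto (fun P : ℝ => P ^ a * ν P) atTop
        (nhds ((A ^ (1 / a) * π / (a * Real.sin (π / a))) ^ a)) := by
  have ha0 : (0:ℝ) < a := lt_trans one_pos ha
  have hsin : 0 < Real.sin (π / a) := by
    apply Real.sin_pos_of_pos_of_lt_pi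
    · positivity
    · exact div_lt_self Real.pi_pos ha
  have hApow : (0:ℝ) < A ^ (1/a) := Real.rpow_pos_of_pos hA _
  have hCbase : (0:ℝ) < A ^ (1/a) * π / (a * Real.sin (π / a)) := by positivity
  refine ⟨fun P hP => exists_unique_sol hA ha hP, Real.rpow_pos_of_pos hCbase a, ?_⟩
  intro ν hν
  set Iv : ℝ := π / (a * Real.sin (π / a)) with hIv
  have hIpos : 0 < Iv := by rw [hIv]; positivity
  set b : ℝ → ℝ := fun P => (ν P / A) ^ (1/a) with hb
  have hbpos : ∀ P, 1 ≤ P → 0 < b P := fun P hP =>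
    Real.rpow_pos_of_pos (div_pos (hν P hP).1 hA) _
  have hsand : ∀ P, 1 ≤ P → Iv - b P ≤ b P * P ∧ b P * P ≤ Iv := by
    intro P hP
    obtain ⟨hνpos, hνeq⟩ := hν P hP
    have hbP := hbpos P hP
    obtain ⟨hsum, hlo, hhi⟩ := sandwich (b := b P) ha hbP
    rw [I_eval ha] at hlo hhi
    have hconv : ∑' ρ : ℕ+, (A * ((ρ:ℕ):ℝ) ^ (-a)) / (A * ((ρ:ℕ):ℝ) ^ (-a) + ν P)
        = ∑' k : ℕ, (1 + (b P * (k:ℝ) + b P) ^ a)⁻¹ := by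
      have h1 : ∀ ρ : ℕ+, (A * ((ρ:ℕ):ℝ) ^ (-a)) / (A * ((ρ:ℕ):ℝ) ^ (-a) + ν P)
          = (1 + (b P * ((ρ:ℕ):ℝ)) ^ a)⁻¹ := fun ρ =>
        term_eq hA ha0 hνpos _ (by exact_mod_cast ρ.pos)
      rw [tsum_congr h1, pnat_tsum_eq (fun x => (1 + (b P * x) ^ a)⁻¹)]
      exact tsum_congr (fun k => by rw [mul_add, mul_one])
    rw [hconv] at hνeq
    rw [hνeq] at hlo hhi
    rw [← hIv] at hlo hhi
    exact ⟨hlo, hhi⟩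
  have hb0 : Tendsto b atTop (nhds 0) := by
    apply tendsto_of_tendsto_of_tendsto_of_le_of_le' tendsto_const_nhds
      (tendsto_const_nhds.div_atTop (tendsto_id (α := ℝ)) : Tendsto (fun P : ℝ => Iv / P) atTop (nhds 0))
    · exact (eventually_ge_atTop 1).mono (fun P hP => (hbpos P hP).le)
    · refine (eventually_ge_atTop 1).mono (fun P hP => ?_)
      have h1 := (hsand P hP).2
      have hP0 : (0:ℝ) < P := lt_of_lt_of_le one_pos hP
      rw [le_div_iff₀ hP0]
      exact h1
  have hbP_tend : Tendsto (fun P => b P * P) atTop (nhds Iv) := by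
    have hlow : Tendsto (fun P => Iv - b P) atTop (nhds Iv) := by
      have := tendsto_const_nhds (α := ℝ) (x := Iv) (f := atTop)
      have h2 := this.sub hb0
      rwa [sub_zero] at h2
    apply tendsto_of_tendsto_of_tendsto_of_le_of_le' hlow tendsto_const_nhds
    · exact (eventually_ge_atTop 1).mono (fun P hP => (hsand P hP).1)
    · exact (eventually_ge_atTop 1).mono (fun P hP => (hsand P hP).2)
  have hcont : ContinuousAt (fun x : ℝ => x ^ a) Iv :=
    Real.continuousAt_rpow_const Iv a (Or.inl hIpos.ne')
  have hfinal : Tendsto (fun P => A * (b P * P) ^ a) atTop (nhds (A * Iv ^ a)) :=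
    (hcont.tendsto.comp hbP_tend).const_mul A
  have hC : (A ^ (1/a) * π / (a * Real.sin (π / a))) ^ a = A * Iv ^ a := by
    rw [mul_div_assoc, ← hIv, Real.mul_rpow hApow.le hIpos.le, ← Real.rpow_mul hA.le,
      one_div_mul_cancel ha0.ne', Real.rpow_one]
  rw [hC]
  apply hfinal.congr'
  refine (eventually_ge_atTop 1).mono (fun P hP => ?_)
  have hνpos := (hν P hP).1
  have hbP := hbpos P hP
  have hP0 : (0:ℝ) < P := lt_of_lt_of_le one_pos hP
  have e1 : (b P * P) ^ a = (b P) ^ a * P ^ a := Real.mul_rpow hbP.le hP0.le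
  show A * (b P * P) ^ a = P ^ a * ν P
  have e2 : (b P) ^ a = ν P / A := by
    rw [hb]
    dsimp only
    rw [← Real.rpow_mul (div_pos hνpos hA).le, one_div_mul_cancel ha0.ne', Real.rpow_one]
  rw [e1, e2]
  field_simp
end

section
/- Let A > 0, a > 0, b > 1 with 2a > b − 1. Then there exists a constant C > 0 such that, as the integer P → ∞, Σ_{ρ=1}^∞ ρ^{-b} · P^{-2a}/(A ρ^{-a} + P^{-a})² ∼ C P^{-(b−1)}. In particular, the contribution of the modes ρ ≤ P (for which λ_ρ = Aρ^{-a} exceeds the threshold P^{-a}) is of the same order as, and does not dominate, the tail sum Σ_{ρ>P} ρ^{-b} ∼ P^{1−b}/(b−1). -/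
open Filter MeasureTheory Set


lemma ceil_eq_on (P : ℕ) (hP0 : (0:ℝ) < P) (ρ : ℕ+) (x : ℝ)
    (hx : x ∈ Ioc ((((ρ:ℕ):ℝ) - 1) / P) (((ρ:ℕ):ℝ) / P)) : ⌈(P:ℝ) * x⌉₊ = (ρ:ℕ) := by
  rw [Nat.ceil_eq_iff ρ.ne_zero]
  obtain ⟨h1, h2⟩ := hx
  constructor
  · have h1' : ((ρ:ℕ):ℝ) - 1 < (P:ℝ) * x := by
      rw [div_lt_iff₀ hP0] at h1; linarith [h1]
    calc ((((ρ:ℕ)) - 1 : ℕ) : ℝ) ≤ ((ρ:ℕ):ℝ) - 1 := by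
          have := ρ.one_le
          push_cast [Nat.cast_sub ρ.one_le]
          simp
      _ < (P:ℝ) * x := h1'
  · rw [le_div_iff₀ hP0] at h2; linarith [h2]

lemma sum_eq_integral (F : ℕ → ℝ) (P : ℕ) (hP : 1 ≤ P)
    (hint : IntegrableOn (fun x : ℝ => F ⌈(P : ℝ) * x⌉₊) (Ioi 0)) :
    ∫ x in Ioi (0:ℝ), F ⌈(P : ℝ) * x⌉₊ = ∑' ρ : ℕ+, F ρ / P := by
  have hP0 : (0:ℝ) < P := by exact_mod_cast hP
  set s : ℕ+ → Set ℝ := fun ρ => Ioc ((((ρ:ℕ):ℝ) - 1) / P) (((ρ:ℕ):ℝ) / P) with hs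
  have hm : ∀ ρ, MeasurableSet (s ρ) := fun ρ => measurableSet_Ioc
  have hu : (⋃ ρ, s ρ) = Ioi 0 := by
    ext x
    simp only [mem_iUnion, hs, mem_Ioc, mem_Ioi]
    constructor
    · rintro ⟨ρ, h1, h2⟩
      have h0 : (0:ℝ) ≤ (((ρ:ℕ):ℝ) - 1) / P := by
        apply div_nonneg _ hP0.le
        have h1' : (1:ℝ) ≤ ((ρ:ℕ):ℝ) := by exact_mod_cast ρ.one_le
        linarith
      linarith
    · intro hx
      have hPx : 0 < (P:ℝ) * x := mul_pos hP0 hx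
      refine ⟨⟨⌈(P:ℝ) * x⌉₊, Nat.ceil_pos.mpr hPx⟩, ?_, ?_⟩
      · simp only [PNat.mk_coe]
        rw [div_lt_iff₀ hP0]
        have := Nat.ceil_lt_add_one hPx.le
        linarith
      · simp only [PNat.mk_coe]
        rw [le_div_iff₀ hP0]
        have := Nat.le_ceil ((P:ℝ) * x)
        linarith
  have hkey : ∀ ρ σ : ℕ+, ρ < σ → Disjoint (s ρ) (s σ) := by
    intro ρ σ h
    simp only [hs, Ioc_disjoint_Ioc]
    have h1 : ((ρ:ℕ):ℝ) ≤ ((σ:ℕ):ℝ) - 1 := by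
      have : (ρ:ℕ) + 1 ≤ (σ:ℕ) := h
      have : ((ρ:ℕ):ℝ) + 1 ≤ ((σ:ℕ):ℝ) := by exact_mod_cast this
      linarith
    calc min (((ρ:ℕ):ℝ)/P) (((σ:ℕ):ℝ)/P) ≤ ((ρ:ℕ):ℝ)/P := min_le_left _ _
      _ ≤ (((σ:ℕ):ℝ) - 1)/P := by gcongr
      _ ≤ max ((((ρ:ℕ):ℝ) - 1)/P) ((((σ:ℕ):ℝ) - 1)/P) := le_max_right _ _
  have hd : Pairwise (Function.onFun Disjoint s) := by
    intro ρ σ hne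
    rcases lt_or_gt_of_ne hne with h | h
    · exact hkey ρ σ h
    · exact (hkey σ ρ h).symm
  rw [← hu, integral_iUnion hm hd (hu ▸ hint)]
  refine tsum_congr fun ρ => ?_
  rw [setIntegral_congr_fun (hm ρ) (fun x hx => by rw [ceil_eq_on P hP0 ρ x hx]),
    setIntegral_const]
  simp only [hs, measureReal_def, Real.volume_Ioc, smul_eq_mul]
  have : ((ρ:ℕ):ℝ) / P - (((ρ:ℕ):ℝ) - 1) / P = 1 / P := by field_simp; ring
  rw [this, ENNReal.toReal_ofReal (by positivity)]
  ring

lemma master (F : ℕ → ℕ → ℝ) (G flim : ℝ → ℝ)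
    (hG : IntegrableOn G (Ioi 0))
    (hbound : ∀ P : ℕ, 1 ≤ P → ∀ x ∈ Ioi (0:ℝ), |F P ⌈(P:ℝ) * x⌉₊| ≤ G x)
    (hlim : ∀ᵐ x ∂(volume.restrict (Ioi (0:ℝ))),
      Tendsto (fun P : ℕ => F P ⌈(P:ℝ) * x⌉₊) atTop (nhds (flim x))) :
    Tendsto (fun P : ℕ => ∑' ρ : ℕ+, F P ρ / P) atTop
      (nhds (∫ x in Ioi (0:ℝ), flim x)) := by
  have hmeas : ∀ P : ℕ, AEStronglyMeasurable (fun x : ℝ => F P ⌈(P:ℝ) * x⌉₊)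
      (volume.restrict (Ioi 0)) := fun P =>
    (measurable_from_nat.comp ((measurable_const_mul ((P:ℝ))).nat_ceil)).aestronglyMeasurable
  have hbd : ∀ P : ℕ, 1 ≤ P → ∀ᵐ x ∂(volume.restrict (Ioi (0:ℝ))),
      ‖F P ⌈(P:ℝ) * x⌉₊‖ ≤ G x := by
    intro P hP
    rw [ae_restrict_iff' measurableSet_Ioi]
    exact ae_of_all _ fun x hx => by simpa [Real.norm_eq_abs] using hbound P hP x hx
  have hint : ∀ P : ℕ, 1 ≤ P → IntegrableOn (fun x : ℝ => F P ⌈(P:ℝ) * x⌉₊) (Ioi 0) :=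
    fun P hP => hG.mono' (hmeas P) (hbd P hP)
  have hDCT := tendsto_integral_filter_of_dominated_convergence (μ := volume.restrict (Ioi 0))
    (l := atTop) (F := fun P : ℕ => fun x : ℝ => F P ⌈(P:ℝ) * x⌉₊) (f := flim) G
    (Eventually.of_forall hmeas)
    (by filter_upwards [eventually_ge_atTop 1] with P hP using hbd P hP) hG hlim
  refine hDCT.congr' ?_
  filter_upwards [eventually_ge_atTop 1] with P hP
  exact sum_eq_integral (F P) P hP (hint P hP)


noncomputable def gfun (A a b x : ℝ) : ℝ := x ^ (-b) / (A * x ^ (-a) + 1) ^ 2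

noncomputable def Gdom (A a b x : ℝ) : ℝ :=
  if x ≤ 1 then ((1 + 2 ^ (2*a-b)) / A ^ 2) * x ^ (min (2*a-b) 0) else x ^ (-b)

lemma gfun_nonneg {A a b : ℝ} (hA : 0 < A) {y : ℝ} (hy : 0 ≤ y) : 0 ≤ gfun A a b y := by
  unfold gfun
  have h1 : 0 ≤ y ^ (-b) := Real.rpow_nonneg hy _
  have h2 : 0 ≤ A * y ^ (-a) := mul_nonneg hA.le (Real.rpow_nonneg hy _)
  positivity

lemma gfun_le_one {A a b : ℝ} (hA : 0 < A) {y : ℝ} (hy : 0 < y) : gfun A a b y ≤ y ^ (-b) := by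
  unfold gfun
  have h2 : 0 ≤ A * y ^ (-a) := mul_nonneg hA.le (Real.rpow_nonneg hy.le _)
  apply div_le_self (Real.rpow_nonneg hy.le _)
  nlinarith [h2]

lemma gfun_le_two {A a b : ℝ} (hA : 0 < A) {y : ℝ} (hy : 0 < y) :
    gfun A a b y ≤ y ^ (2*a-b) / A ^ 2 := by
  unfold gfun
  have hya : 0 < y ^ (-a) := Real.rpow_pos_of_pos hy _
  have h0 : 0 < (A * y ^ (-a)) ^ 2 := by positivity
  have step1 : y ^ (-b) / (A * y ^ (-a) + 1) ^ 2 ≤ y ^ (-b) / (A * y ^ (-a)) ^ 2 := by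
    apply div_le_div_of_nonneg_left (Real.rpow_nonneg hy.le _) h0
    nlinarith [mul_pos hA hya]
  refine step1.trans (le_of_eq ?_)
  have e1 : (y ^ (-a)) ^ 2 = y ^ (-(2*a)) := by
    rw [sq, ← Real.rpow_add hy]; ring_nf
  have e2 : y ^ (2*a-b) = y ^ (-b) * y ^ (2*a) := by
    rw [← Real.rpow_add hy]; ring_nf
  have hy2a : (0:ℝ) < y ^ (2*a) := Real.rpow_pos_of_pos hy _
  rw [mul_pow, e1, Real.rpow_neg hy.le (2*a), e2]
  field_simp


lemma gfun_le_Gdom {A a b : ℝ} (hA : 0 < A) (ha : 0 < a) (hb : 1 < b)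
    {x y : ℝ} (hx : 0 < x) (hxy : x ≤ y) (hy1 : y ≤ x + 1) :
    gfun A a b y ≤ Gdom A a b x := by
  have hy : 0 < y := hx.trans_le hxy
  unfold Gdom
  by_cases hx1 : x ≤ 1
  · rw [if_pos hx1]
    rcases le_or_gt (2*a-b) 0 with hc | hc
    · rw [min_eq_left hc]
      refine (gfun_le_two hA hy).trans ?_
      have h1 : y ^ (2*a-b) ≤ x ^ (2*a-b) := Real.rpow_le_rpow_of_nonpos hx hxy hc
      have h2 : x ^ (2*a-b) / A ^ 2 = (1 / A ^ 2) * x ^ (2*a-b) := by ring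
      have h3 : (1:ℝ) / A ^ 2 ≤ (1 + 2 ^ (2*a-b)) / A ^ 2 := by
        apply div_le_div_of_nonneg_right ?_ (by positivity)
        · nlinarith [Real.rpow_nonneg (by norm_num : (0:ℝ) ≤ 2) (2*a-b)]
      calc y ^ (2*a-b) / A ^ 2 ≤ x ^ (2*a-b) / A ^ 2 := by
            apply div_le_div_of_nonneg_right h1 (by positivity)
        _ = (1 / A ^ 2) * x ^ (2*a-b) := h2
        _ ≤ (1 + 2 ^ (2*a-b)) / A ^ 2 * x ^ (2*a-b) := by
            apply mul_le_mul_of_nonneg_right h3 (Real.rpow_nonneg hx.le _)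
    · rw [min_eq_right hc.le, Real.rpow_zero, mul_one]
      refine (gfun_le_two hA hy).trans ?_
      have hy2 : y ≤ 2 := by linarith
      have h1 : y ^ (2*a-b) ≤ 2 ^ (2*a-b) := Real.rpow_le_rpow hy.le hy2 hc.le
      have h2 : (0:ℝ) < A ^ 2 := by positivity
      have := h1
      apply (div_le_div_iff_of_pos_right h2).mpr
      linarith
  · rw [if_neg hx1]
    push_neg at hx1
    exact (gfun_le_one hA hy).trans (Real.rpow_le_rpow_of_nonpos hx hxy (by linarith))

lemma Gdom_integrable {A a b : ℝ} (hA : 0 < A) (ha : 0 < a) (hb : 1 < b)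
    (hab : b - 1 < 2 * a) : IntegrableOn (Gdom A a b) (Ioi 0) := by
  have hsplit : Ioi (0:ℝ) = Ioc 0 1 ∪ Ioi 1 := (Ioc_union_Ioi_eq_Ioi zero_le_one).symm
  rw [hsplit]
  apply IntegrableOn.union
  · have hc : -1 < min (2*a-b) 0 := by
      rcases min_cases (2*a-b) 0 with ⟨h, _⟩ | ⟨h, _⟩ <;> rw [h] <;> linarith
    have hint : IntegrableOn (fun x : ℝ => ((1 + 2 ^ (2*a-b)) / A ^ 2) * x ^ (min (2*a-b) 0))
        (Ioc 0 1) := by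
      apply Integrable.const_mul
      exact (intervalIntegrable_iff_integrableOn_Ioc_of_le zero_le_one).mp
        (intervalIntegral.intervalIntegrable_rpow' hc)
    exact hint.congr_fun (fun x hx => by rw [Gdom, if_pos hx.2]) measurableSet_Ioc
  · have hint : IntegrableOn (fun x : ℝ => x ^ (-b)) (Ioi 1) :=
      integrableOn_Ioi_rpow_of_lt (by linarith) one_pos
    exact hint.congr_fun (fun x hx => by rw [Gdom, if_neg (not_le.mpr hx)]) measurableSet_Ioi

lemma ceil_div_tendsto {x : ℝ} (hx : 0 ≤ x) :
    Tendsto (fun P : ℕ => (⌈(P:ℝ) * x⌉₊ : ℝ) / P) atTop (nhds x) := by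
  have hupper : Tendsto (fun P : ℕ => x + 1 / (P:ℝ)) atTop (nhds x) := by
    have := tendsto_one_div_atTop_nhds_zero_nat (𝕜 := ℝ)
    simpa using tendsto_const_nhds.add this
  apply tendsto_of_tendsto_of_tendsto_of_le_of_le' tendsto_const_nhds hupper
  · filter_upwards [eventually_ge_atTop 1] with P hP
    have hP0 : (0:ℝ) < P := by exact_mod_cast hP
    rw [le_div_iff₀ hP0, mul_comm]
    exact Nat.le_ceil _
  · filter_upwards [eventually_ge_atTop 1] with P hP
    have hP0 : (0:ℝ) < P := by exact_mod_cast hP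
    rw [div_le_iff₀ hP0]
    have := Nat.ceil_lt_add_one (mul_nonneg (Nat.cast_nonneg P) hx)
    calc (⌈(P:ℝ) * x⌉₊ : ℝ) ≤ (P:ℝ) * x + 1 := this.le
      _ ≤ (x + 1/P) * P := by field_simp; ring_nf; linarith
  
lemma gfun_continuousAt {A a b : ℝ} (hA : 0 < A) {x : ℝ} (hx : 0 < x) :
    ContinuousAt (gfun A a b) x := by
  unfold gfun
  apply ContinuousAt.div
  · exact Real.continuousAt_rpow_const x (-b) (Or.inl hx.ne')
  · exact (((Real.continuousAt_rpow_const x (-a) (Or.inl hx.ne')).const_mul A).add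
      continuousAt_const).pow 2
  · have : 0 < A * x ^ (-a) + 1 := by
      have := Real.rpow_pos_of_pos hx (-a); nlinarith
    positivity

lemma term_eq_s15 {A a b : ℝ} (hA : 0 < A) (P ρ : ℕ) (hP : 1 ≤ P) (hρ : 1 ≤ ρ) :
    (P:ℝ) ^ (b-1) * ((ρ:ℝ) ^ (-b) * (P:ℝ) ^ (-(2*a)) / (A * (ρ:ℝ) ^ (-a) + (P:ℝ) ^ (-a)) ^ 2)
      = gfun A a b ((ρ:ℝ) / P) / P := by
  have hp : (0:ℝ) < P := by exact_mod_cast hP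
  have hr : (0:ℝ) < ρ := by exact_mod_cast hρ
  have hdivb : ((ρ:ℝ)/P) ^ (-b) = (ρ:ℝ)^(-b) * (P:ℝ)^b := by
    rw [Real.div_rpow hr.le hp.le, Real.rpow_neg hp.le, div_inv_eq_mul]
  have hdiva : ((ρ:ℝ)/P) ^ (-a) = (ρ:ℝ)^(-a) * (P:ℝ)^a := by
    rw [Real.div_rpow hr.le hp.le, Real.rpow_neg hp.le, div_inv_eq_mul]
  have hkey : A * ((ρ:ℝ)^(-a) * (P:ℝ)^a) + 1 = (P:ℝ)^a * (A * (ρ:ℝ)^(-a) + (P:ℝ)^(-a)) := by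
    rw [mul_add, Real.rpow_neg hp.le a, mul_inv_cancel₀ (Real.rpow_pos_of_pos hp a).ne']
    ring
  have hb1 : (P:ℝ) ^ b = (P:ℝ) ^ (b-1) * P := by
    have e : b = b - 1 + 1 := by ring
    rw [e, Real.rpow_add_one hp.ne']; ring_nf
  have h2a : (P:ℝ) ^ (-(2*a)) = ((P:ℝ)^a * (P:ℝ)^a)⁻¹ := by
    rw [← Real.rpow_add hp, ← Real.rpow_neg hp.le]
    congr 1; ring
  have hD : 0 < A * (ρ:ℝ)^(-a) + (P:ℝ)^(-a) := by
    have h1 := Real.rpow_pos_of_pos hr (-a)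
    have h2 := Real.rpow_pos_of_pos hp (-a)
    nlinarith
  have hpa : ((P:ℝ):ℝ)^a ≠ 0 := (Real.rpow_pos_of_pos hp a).ne'
  unfold gfun
  rw [hdivb, hdiva, hkey, mul_pow, hb1, h2a]
  field_simp

noncomputable def F2 (b : ℝ) (P n : ℕ) : ℝ := if P < n then ((n:ℝ)/(P:ℝ)) ^ (-b) else 0

noncomputable def G2 (b x : ℝ) : ℝ := if x ≤ 1 then 0 else x ^ (-b)

noncomputable def flim2 (b x : ℝ) : ℝ := if 1 < x then x ^ (-b) else 0

lemma hbound2 {b : ℝ} (hb : 1 < b) : ∀ P : ℕ, 1 ≤ P → ∀ x ∈ Ioi (0:ℝ),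
    |F2 b P ⌈(P:ℝ) * x⌉₊| ≤ G2 b x := by
  intro P hP x hx
  have hP0 : (0:ℝ) < P := by exact_mod_cast hP
  have hx0 : (0:ℝ) < x := hx
  by_cases hx1 : x ≤ 1
  · have hle : ⌈(P:ℝ) * x⌉₊ ≤ P := Nat.ceil_le.mpr (by nlinarith)
    rw [F2, if_neg (by omega), G2, if_pos hx1]
    simp
  · push_neg at hx1
    rw [G2, if_neg (not_le.mpr hx1)]
    rw [F2]
    by_cases h : P < ⌈(P:ℝ) * x⌉₊
    · rw [if_pos h]
      have hy : x ≤ (⌈(P:ℝ) * x⌉₊ : ℝ) / P := by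
        rw [le_div_iff₀ hP0, mul_comm]; exact Nat.le_ceil _
      have := Real.rpow_le_rpow_of_nonpos hx0 hy (by linarith : -b ≤ 0)
      rw [abs_of_nonneg (Real.rpow_nonneg (by positivity) _)]
      exact this
    · rw [if_neg h]
      simp [Real.rpow_nonneg hx0.le]

lemma G2_integrable {b : ℝ} (hb : 1 < b) : IntegrableOn (G2 b) (Ioi 0) := by
  rw [(Ioc_union_Ioi_eq_Ioi zero_le_one).symm]
  apply IntegrableOn.union
  · exact (integrableOn_zero).congr_fun (fun x hx => by rw [G2, if_pos hx.2]) measurableSet_Ioc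
  · have hint : IntegrableOn (fun x : ℝ => x ^ (-b)) (Ioi 1) :=
      integrableOn_Ioi_rpow_of_lt (by linarith) one_pos
    exact hint.congr_fun (fun x hx => by rw [G2, if_neg (not_le.mpr hx)]) measurableSet_Ioi

lemma hlim2 {b : ℝ} (hb : 1 < b) : ∀ᵐ x ∂(volume.restrict (Ioi (0:ℝ))),
    Tendsto (fun P : ℕ => F2 b P ⌈(P:ℝ) * x⌉₊) atTop (nhds (flim2 b x)) := by
  have h1 : ∀ᵐ x : ℝ, x ≠ 1 := by
    rw [ae_iff]
    have he : {x : ℝ | ¬ x ≠ 1} = {1} := by ext z; simp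
    rw [he, Real.volume_singleton]
  filter_upwards [ae_restrict_mem measurableSet_Ioi, ae_restrict_of_ae h1] with x hx hx1
  have hx0 : (0:ℝ) < x := hx
  rcases lt_or_gt_of_ne hx1 with hlt | hgt
  · have hf : flim2 b x = 0 := by rw [flim2, if_neg (by linarith)]
    rw [hf]
    apply Tendsto.congr' _ tendsto_const_nhds
    filter_upwards [eventually_ge_atTop 1] with P hP
    have hP0 : (0:ℝ) < P := by exact_mod_cast hP
    have hle : ⌈(P:ℝ)*x⌉₊ ≤ P := Nat.ceil_le.mpr (by nlinarith)
    rw [F2, if_neg (by omega)]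
  · have hf : flim2 b x = x ^ (-b) := if_pos hgt
    rw [hf]
    have htend : Tendsto (fun P : ℕ => ((⌈(P:ℝ)*x⌉₊:ℝ)/P) ^ (-b)) atTop (nhds (x ^ (-b))) :=
      Tendsto.comp (Real.continuousAt_rpow_const x (-b) (Or.inl hx0.ne')) (ceil_div_tendsto hx0.le)
    apply htend.congr'
    filter_upwards [eventually_ge_atTop 1] with P hP
    have hP0 : (0:ℝ) < P := by exact_mod_cast hP
    have hlt' : P < ⌈(P:ℝ)*x⌉₊ := by
      rw [Nat.lt_ceil]; nlinarith
    rw [F2, if_pos hlt']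

lemma flim2_integral {b : ℝ} (hb : 1 < b) :
    ∫ x in Ioi (0:ℝ), flim2 b x = 1 / (b - 1) := by
  have he : flim2 b = Set.indicator (Ioi 1) (fun x : ℝ => x ^ (-b)) := by
    funext z
    rw [flim2, Set.indicator_apply]
    simp only [mem_Ioi]
  rw [he, MeasureTheory.integral_indicator measurableSet_Ioi,
    Measure.restrict_restrict measurableSet_Ioi,
    inter_eq_self_of_subset_left (Ioi_subset_Ioi zero_le_one),
    integral_Ioi_rpow_of_lt (by linarith : -b < -1) one_pos]
  rw [Real.one_rpow]
  rw [div_eq_div_iff (by linarith) (by linarith)]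
  ring

lemma gfun_integrable {A a b : ℝ} (hA : 0 < A) (ha : 0 < a) (hb : 1 < b)
    (hab : b - 1 < 2 * a) : IntegrableOn (gfun A a b) (Ioi 0) := by
  have hm : AEStronglyMeasurable (gfun A a b) (volume.restrict (Ioi 0)) :=
    (continuousOn_of_forall_continuousAt (fun x hx => gfun_continuousAt hA hx)).aestronglyMeasurable
      measurableSet_Ioi
  apply (Gdom_integrable hA ha hb hab).mono' hm
  rw [ae_restrict_iff' measurableSet_Ioi]
  refine ae_of_all _ fun x hx => ?_
  have hx0 : (0:ℝ) < x := hx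
  rw [Real.norm_eq_abs, abs_of_nonneg (gfun_nonneg hA hx0.le)]
  exact gfun_le_Gdom hA ha hb hx0 le_rfl (by linarith)

lemma C_pos {A a b : ℝ} (hA : 0 < A) (ha : 0 < a) (hb : 1 < b)
    (hab : b - 1 < 2 * a) : 0 < ∫ x in Ioi (0:ℝ), gfun A a b x := by
  have hc0 : (0:ℝ) < 2 ^ (-b) / (A+1) ^ 2 := by
    have := Real.rpow_pos_of_pos (by norm_num : (0:ℝ) < 2) (-b)
    positivity
  have hsub : Ioc (1:ℝ) 2 ⊆ Ioi 0 := fun x hx => lt_trans one_pos hx.1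
  have hlow : ∀ x ∈ Ioc (1:ℝ) 2, 2 ^ (-b) / (A+1) ^ 2 ≤ gfun A a b x := by
    intro x hx
    have hx0 : (0:ℝ) < x := lt_trans one_pos hx.1
    have e1 : (2:ℝ)^(-b) ≤ x^(-b) := Real.rpow_le_rpow_of_nonpos hx0 hx.2 (by linarith)
    have e2 : x^(-a) ≤ 1 := Real.rpow_le_one_of_one_le_of_nonpos hx.1.le (by linarith)
    have e5 : 0 ≤ x ^ (-a) := Real.rpow_nonneg hx0.le _
    have e6 : 0 ≤ A * x ^ (-a) := mul_nonneg hA.le e5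
    have e7 : A * x ^ (-a) ≤ A := by nlinarith
    have e3 : (A*x^(-a)+1)^2 ≤ (A+1)^2 := by nlinarith
    have e4 : 0 < (A*x^(-a)+1)^2 := by nlinarith
    unfold gfun
    exact div_le_div₀ (Real.rpow_nonneg hx0.le _) e1 e4 e3
  have hint := gfun_integrable hA ha hb hab
  have h1 : (2 ^ (-b) / (A+1) ^ 2) * (volume (Ioc (1:ℝ) 2)).toReal
      ≤ ∫ x in Ioc (1:ℝ) 2, gfun A a b x :=
    setIntegral_ge_of_const_le_real measurableSet_Ioc (by simp) hlow (hint.mono_set hsub)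
  have h2 : ∫ x in Ioc (1:ℝ) 2, gfun A a b x ≤ ∫ x in Ioi (0:ℝ), gfun A a b x := by
    apply setIntegral_mono_set hint
    · exact (ae_restrict_iff' measurableSet_Ioi).mpr
        (ae_of_all _ fun x hx => gfun_nonneg hA (le_of_lt hx))
    · exact HasSubset.Subset.eventuallyLE hsub
  have hv : (volume (Ioc (1:ℝ) 2)).toReal = 1 := by
    rw [Real.volume_Ioc]
    norm_num
  rw [hv, mul_one] at h1
  linarith

lemma part2_eq {b : ℝ} (hb : 1 < b) (P : ℕ) (hP : 1 ≤ P) :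
    ∑' ρ : ℕ+, F2 b P (ρ:ℕ) / P =
      (P:ℝ) ^ (b-1) * ∑' ρ : {ρ : ℕ+ // P < (ρ : ℕ)}, ((ρ.val : ℕ) : ℝ) ^ (-b) := by
  have hp : (0:ℝ) < P := by exact_mod_cast hP
  have e0 : ∀ ρ : ℕ+, F2 b P (ρ:ℕ) / P =
      Set.indicator {ρ : ℕ+ | P < (ρ:ℕ)}
        (fun ρ : ℕ+ => (P:ℝ)^(b-1) * (((ρ:ℕ):ℝ))^(-b)) ρ := by
    intro ρ
    rw [Set.indicator_apply]
    simp only [mem_setOf_eq]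
    by_cases h : P < (ρ:ℕ)
    · rw [if_pos h, F2, if_pos h]
      have hr : (0:ℝ) < (ρ:ℕ) := by exact_mod_cast ρ.pos
      rw [Real.div_rpow hr.le hp.le, Real.rpow_neg hp.le, div_inv_eq_mul]
      have hb1 : (P:ℝ) ^ b = (P:ℝ) ^ (b-1) * P := by
        have e : b = b - 1 + 1 := by ring
        rw [e, Real.rpow_add_one hp.ne']; ring_nf
      rw [hb1]
      field_simp
    · rw [if_neg h, F2, if_neg h, zero_div]
  calc ∑' ρ : ℕ+, F2 b P (ρ:ℕ) / P
      = ∑' ρ : ℕ+, Set.indicator {ρ : ℕ+ | P < (ρ:ℕ)}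
        (fun ρ : ℕ+ => (P:ℝ)^(b-1) * (((ρ:ℕ):ℝ))^(-b)) ρ := tsum_congr e0
    _ = ∑' ρ : {ρ : ℕ+ | P < (ρ:ℕ)}, (P:ℝ)^(b-1) * (((ρ:ℕ):ℝ))^(-b) :=
        (tsum_subtype _ _).symm
    _ = (P:ℝ) ^ (b-1) * ∑' ρ : {ρ : ℕ+ // P < (ρ : ℕ)}, ((ρ.val : ℕ) : ℝ) ^ (-b) :=
        tsum_mul_left

/-- asymptotics of the mode-decomposed ridgeless generalisation error for
a power-law kernel spectrum `λ_ρ = Aρ^{-a}` and target coefficients `E[|c_ρ|²] = ρ^{-b}`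
with `2a > b − 1`: the full mode sum scales as `C P^{-(b−1)}`, of the same order as the
tail sum `Σ_{ρ>P} ρ^{-b} ∼ P^{1−b}/(b−1)`. -/
theorem statement_15 (A a b : ℝ) (hA : 0 < A) (ha : 0 < a) (hb : 1 < b)
    (hab : b - 1 < 2 * a) :
    (∃ C : ℝ, 0 < C ∧
      Tendsto (fun P : ℕ => (P : ℝ) ^ (b - 1) *
          ∑' ρ : ℕ+, ((ρ : ℕ) : ℝ) ^ (-b) * (P : ℝ) ^ (-(2 * a)) /
            (A * ((ρ : ℕ) : ℝ) ^ (-a) + (P : ℝ) ^ (-a)) ^ 2)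
        atTop (nhds C)) ∧
    Tendsto (fun P : ℕ => (P : ℝ) ^ (b - 1) *
        ∑' ρ : {ρ : ℕ+ // P < (ρ : ℕ)}, ((ρ.val : ℕ) : ℝ) ^ (-b))
      atTop (nhds (1 / (b - 1))) := by
  constructor
  · refine ⟨∫ x in Ioi (0:ℝ), gfun A a b x, C_pos hA ha hb hab, ?_⟩
    have hbd1 : ∀ P : ℕ, 1 ≤ P → ∀ x ∈ Ioi (0:ℝ),
        |gfun A a b ((⌈(P:ℝ) * x⌉₊ : ℝ) / P)| ≤ Gdom A a b x := by
      intro P hP x hx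
      have hP0 : (0:ℝ) < P := by exact_mod_cast hP
      have hx0 : (0:ℝ) < x := hx
      have hxy : x ≤ (⌈(P:ℝ) * x⌉₊ : ℝ) / P := by
        rw [le_div_iff₀ hP0, mul_comm]; exact Nat.le_ceil _
      have hy1 : (⌈(P:ℝ) * x⌉₊ : ℝ) / P ≤ x + 1 := by
        rw [div_le_iff₀ hP0]
        have h1 := Nat.ceil_lt_add_one (mul_nonneg (Nat.cast_nonneg P) hx0.le)
        have hP1 : (1:ℝ) ≤ P := by exact_mod_cast hP
        nlinarith
      rw [abs_of_nonneg (gfun_nonneg hA (hx0.trans_le hxy).le)]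
      exact gfun_le_Gdom hA ha hb hx0 hxy hy1
    have hlim1 : ∀ᵐ x ∂(volume.restrict (Ioi (0:ℝ))),
        Tendsto (fun P : ℕ => gfun A a b ((⌈(P:ℝ) * x⌉₊ : ℝ) / P)) atTop
          (nhds (gfun A a b x)) := by
      rw [ae_restrict_iff' measurableSet_Ioi]
      refine ae_of_all _ fun x hx => ?_
      have hx0 : (0:ℝ) < x := hx
      exact Tendsto.comp (gfun_continuousAt hA hx0) (ceil_div_tendsto hx0.le)
    have hm := master (fun P n => gfun A a b ((n:ℝ)/P)) (Gdom A a b) (gfun A a b)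
      (Gdom_integrable hA ha hb hab) hbd1 hlim1
    refine hm.congr' ?_
    filter_upwards [eventually_ge_atTop 1] with P hP
    rw [← tsum_mul_left]
    exact tsum_congr fun ρ => (term_eq_s15 hA P (ρ:ℕ) hP ρ.one_le).symm
  · have hm := master (fun P n => F2 b P n) (G2 b) (flim2 b)
      (G2_integrable hb) (hbound2 hb) (hlim2 hb)
    rw [flim2_integral hb] at hm
    refine hm.congr' ?_
    filter_upwards [eventually_ge_atTop 1] with P hP
    exact part2_eq hb P hP
end
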